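/- Suppose T is 2-torsion free and the following three conditions hold: (1) Z(A)_k = π_A(Z(T)); (2) Z(B)_k = π_B(Z(T)); (3) there exists m0 ∈ M such that Z(T) = {a + b : a ∈ Z(A), b ∈ Z(B), am0 = m0b}. Then every k-commuting R-linear map Θ: T → T is proper, i.e., there exist λ ∈ Z(T) and an R-linear map ζ: T → Z(T) such that Θ(t) = λt + ζ(t) for all t ∈ T. -/

import Mathlib

/-- The iterated commutator: `iterComm 0 x y = x`, `iterComm (i+1) x y = [iterComm i x y, y]`. -/
def iterComm {T : Type*} [Ring T] : ℕ → T → T → T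
  | 0, x, _ => x
  | i + 1, x, y => iterComm i x y * y - y * iterComm i x y

namespace DuWang

variable {T : Type*} [Ring T]

@[simp] lemma iterComm_zero (x y : T) : iterComm 0 x y = x := rfl

@[simp] lemma iterComm_succ (i : ℕ) (x y : T) :
    iterComm (i+1) x y = iterComm i x y * y - y * iterComm i x y := rfl

lemma iterComm_add_left (x y t : T) : ∀ i, iterComm i (x + y) t = iterComm i x t + iterComm i y t := by
  intro i; induction i with
  | zero => rfl
  | succ i ih => simp only [iterComm_succ, ih]; noncomm_ring

lemma iterComm_neg_left (x t : T) : ∀ i, iterComm i (-x) t = -iterComm i x t := by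
  intro i; induction i with
  | zero => rfl
  | succ i ih => simp only [iterComm_succ, ih]; noncomm_ring

lemma iterComm_sub_left (x y t : T) (i : ℕ) :
    iterComm i (x - y) t = iterComm i x t - iterComm i y t := by
  rw [sub_eq_add_neg, iterComm_add_left, iterComm_neg_left, ← sub_eq_add_neg]

/-- if `x` commutes with `t` then all brackets of positive order vanish. -/
lemma iterComm_of_comm {x t : T} (h : x * t = t * x) : ∀ i, iterComm (i+1) x t = 0 := by
  intro i; induction i with
  | zero => simp [h]
  | succ i ih => rw [iterComm_succ, ih, zero_mul, mul_zero, sub_zero]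

lemma iterComm_zero_right (x : T) (i : ℕ) : iterComm (i+1) x 0 = 0 :=
  iterComm_of_comm (by simp) i

/-- For an idempotent `u`, `[x,u]_k = 0` (k ≥ 1) forces `[x,u] = 0`. -/
lemma idem_comm (k : ℕ) (hk : 1 ≤ k) (x u : T) (hu : u * u = u)
    (h : iterComm k x u = 0) : x * u = u * x := by
  obtain ⟨c1, hc1⟩ : ∃ c, c = x * u - u * x := ⟨_, rfl⟩
  obtain ⟨c2, hc2⟩ : ∃ c, c = c1 * u - u * c1 := ⟨_, rfl⟩
  have h1 : c1 * u + u * c1 = c1 := by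
    have key : (x*u - u*x) * u + u * (x*u - u*x) = x*(u*u) - (u*u)*x := by noncomm_ring
    rw [hu] at key; rw [hc1]; exact key
  have hu1 : u * (c1 * u) = 0 := by
    have key : u * ((x*u - u*x) * u) = u*x*(u*u) - (u*u)*(x*u) := by noncomm_ring
    rw [hu] at key; rw [hc1, key, mul_assoc]; exact sub_self _
  have h2 : c2 * u - u * c2 = c1 := by
    have key : (c1*u - u*c1) * u - u * (c1*u - u*c1) =
        c1*(u*u) + (u*u)*c1 - (u*(c1*u) + u*(c1*u)) := by noncomm_ring
    rw [hu, hu1] at key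
    rw [hc2, key, add_zero, sub_zero, h1]
  have parity : ∀ j : ℕ, iterComm (2*j+1) x u = c1 ∧ iterComm (2*j+2) x u = c2 := by
    intro j; induction j with
    | zero =>
      constructor
      · simpa using hc1.symm
      · show iterComm 2 x u = c2
        rw [hc2, hc1]; rfl
    | succ j ih =>
      have e1 : 2*(j+1)+1 = (2*j+2)+1 := by ring
      have e2 : 2*(j+1)+2 = ((2*j+2)+1)+1 := by ring
      have h3 : iterComm ((2*j+2)+1) x u = c1 := by
        rw [iterComm_succ, ih.2, ← h2]
      refine ⟨by rw [e1, h3], ?_⟩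
      rw [e2, iterComm_succ, h3, ← hc2]
  have hc10 : c1 = 0 := by
    rcases Nat.even_or_odd k with he | ho
    · obtain ⟨j, hj⟩ := he
      have hj1 : 1 ≤ j := by omega
      have hkk : k = 2*(j-1)+2 := by omega
      rw [hkk] at h
      have hc20 : c2 = 0 := by rw [← (parity (j-1)).2, h]
      rw [← h2, hc20]; simp
    · obtain ⟨j, hj⟩ := ho
      rw [hj] at h; rw [← (parity j).1, h]
  rw [hc1] at hc10; exact sub_eq_zero.mp hc10

/-- The `M`-component sequence of the iterated commutator of `x = P+Q+S` with `t = a+m+b`. -/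
def mseq (a m b P Q S : T) : ℕ → T
  | 0 => Q
  | j + 1 => iterComm j P a * m - m * iterComm j S b + mseq a m b P Q S j * b
      - a * mseq a m b P Q S j

@[simp] lemma mseq_zero (a m b P Q S : T) : mseq a m b P Q S 0 = Q := rfl

@[simp] lemma mseq_succ (a m b P Q S : T) (j : ℕ) :
    mseq a m b P Q S (j+1) = iterComm j P a * m - m * iterComm j S b
      + mseq a m b P Q S j * b - a * mseq a m b P Q S j := rfl

/-- closed form of `mseq` when `b = 0`. -/
lemma mseq_closed_left (a m P Q S : T) : ∀ j : ℕ,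
    mseq a m 0 P Q S (j+1) =
      (∑ i ∈ Finset.range (j+1), (-a)^(j-i) * (iterComm i P a * m))
        - (-a)^j * (m * S) + (-a)^(j+1) * Q := by
  intro j; induction j with
  | zero => simp; noncomm_ring
  | succ j ih =>
    rw [mseq_succ, ih, iterComm_zero_right]
    rw [Finset.sum_range_succ (fun i => (-a)^(j+1-i) * (iterComm i P a * m)) (j+1)]
    have hsum : a * ((∑ i ∈ Finset.range (j+1), (-a)^(j-i) * (iterComm i P a * m))
        - (-a)^j * (m * S) + (-a)^(j+1) * Q)
        = -((∑ i ∈ Finset.range (j+1), (-a)^(j+1-i) * (iterComm i P a * m))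
            - (-a)^(j+1) * (m * S) + (-a)^(j+2) * Q) := by
      rw [mul_add, mul_sub, Finset.mul_sum]
      have e1 : ∀ i ∈ Finset.range (j+1),
          a * ((-a)^(j-i) * (iterComm i P a * m)) = -((-a)^(j+1-i) * (iterComm i P a * m)) := by
        intro i hi
        have : j + 1 - i = (j - i) + 1 := by
          have := Finset.mem_range.mp hi; omega
        rw [this, pow_succ']
        noncomm_ring
      rw [Finset.sum_congr rfl e1]
      have e2 : a * ((-a)^j * (m*S)) = -((-a)^(j+1) * (m*S)) := by
        rw [pow_succ']; noncomm_ring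
      have e3 : a * ((-a)^(j+1) * Q) = -((-a)^(j+2) * Q) := by
        rw [pow_succ' (-a) (j+1)]; noncomm_ring
      rw [e2, e3, Finset.sum_neg_distrib]
      abel
    rw [hsum]
    have e4 : (-a)^(j+1-(j+1)) = 1 := by simp
    rw [e4]
    simp only [mul_zero, zero_mul, sub_zero, add_zero, one_mul, sub_neg_eq_add]
    abel

/-- closed form of `mseq` when `a = 0`. -/
lemma mseq_closed_right (b m P Q S : T) : ∀ j : ℕ,
    mseq 0 m b P Q S (j+1) =
      (P * m) * b^j + Q * b^(j+1)
        - ∑ i ∈ Finset.range (j+1), (m * iterComm i S b) * b^(j-i) := by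
  intro j; induction j with
  | zero => simp; noncomm_ring
  | succ j ih =>
    have hP0 : iterComm (j+1) P (0:T) = 0 := iterComm_zero_right P j
    rw [mseq_succ, ih, hP0]
    rw [Finset.sum_range_succ (fun i => (m * iterComm i S b) * b^(j+1-i)) (j+1)]
    have e4 : (j+1) - (j+1) = 0 := by omega
    rw [e4, pow_zero, mul_one]
    have hsum : ((P * m) * b^j + Q * b^(j+1)
        - ∑ i ∈ Finset.range (j+1), (m * iterComm i S b) * b^(j-i)) * b
        = (P*m) * b^(j+1) + Q * b^(j+2)
          - ∑ i ∈ Finset.range (j+1), (m * iterComm i S b) * b^(j+1-i) := by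
      rw [sub_mul, add_mul, Finset.sum_mul]
      have e1 : ∀ i ∈ Finset.range (j+1),
          ((m * iterComm i S b) * b^(j-i)) * b = (m * iterComm i S b) * b^(j+1-i) := by
        intro i hi
        have : j + 1 - i = (j - i) + 1 := by
          have := Finset.mem_range.mp hi; omega
        rw [this, pow_succ, ← mul_assoc]
      have e2 : ((P*m) * b^j) * b = (P*m) * b^(j+1) := by rw [mul_assoc, ← pow_succ]
      have e3 : (Q * b^(j+1)) * b = Q * b^(j+2) := by rw [mul_assoc, ← pow_succ]
      rw [Finset.sum_congr rfl e1, e2, e3]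
    rw [hsum]
    simp only [mul_zero, zero_mul, sub_zero, add_zero, one_mul]
    abel

/-- Bezout-style annihilation: if `X^n` and `Y^n` both kill `d` (from the left),
`X` and `Y` commute, and `X + Y` acts as identity on `d`, then `d = 0`. -/
lemma bezout_left (X Y d : T) (n : ℕ)
    (hc : X * Y = Y * X) (hX : X ^ n * d = 0) (hY : Y ^ n * d = 0)
    (hd : (X + Y) * d = d) : d = 0 := by
  have hC : Commute X Y := hc
  have hpow : ∀ j : ℕ, (X + Y) ^ j * d = d := by
    intro j; induction j with
    | zero => simp
    | succ j ih => rw [pow_succ, mul_assoc, hd, ih]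
  have key : ∀ i j : ℕ, n ≤ i ∨ n ≤ j → (X ^ i * Y ^ j) * d = 0 := by
    intro i j hij
    rcases hij with hi | hj
    · have e1 : X ^ i = X ^ (i - n) * X ^ n := by rw [← pow_add]; congr 1; omega
      have e2 : X ^ n * Y ^ j = Y ^ j * X ^ n := (hC.pow_pow n j).eq
      rw [e1, mul_assoc (X^(i-n)) (X^n) (Y^j), e2, mul_assoc (X^(i-n)), mul_assoc (Y^j),
        hX, mul_zero, mul_zero]
    · have e1 : Y ^ j = Y ^ (j - n) * Y ^ n := by rw [← pow_add]; congr 1; omega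
      rw [e1, ← mul_assoc, mul_assoc, hY, mul_zero]
  calc d = (X + Y) ^ (2 * n + 1) * d := (hpow _).symm
    _ = (∑ m ∈ Finset.range (2*n+1+1), X ^ m * Y ^ (2*n+1-m) * (Nat.choose (2*n+1) m : T)) * d := by
        rw [hC.add_pow]
    _ = ∑ m ∈ Finset.range (2*n+1+1), X ^ m * Y ^ (2*n+1-m) * ((Nat.choose (2*n+1) m : T) * d) := by
        rw [Finset.sum_mul]
        exact Finset.sum_congr rfl (fun m _ => by rw [mul_assoc])
    _ = 0 := by
        apply Finset.sum_eq_zero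
        intro m hm
        have hcast : (Nat.choose (2*n+1) m : T) * d = d * (Nat.choose (2*n+1) m : T) :=
          (Nat.cast_commute _ _).eq
        rw [hcast, ← mul_assoc, key m (2*n+1-m) (by
          rcases le_or_gt n m with h | h
          · exact Or.inl h
          · right; omega), zero_mul]

/-- Right-sided version of `bezout_left`. -/
lemma bezout_right (X Y d : T) (n : ℕ)
    (hc : X * Y = Y * X) (hX : d * X ^ n = 0) (hY : d * Y ^ n = 0)
    (hd : d * (X + Y) = d) : d = 0 := by
  have hC : Commute X Y := hc
  have hpow : ∀ j : ℕ, d * (X + Y) ^ j = d := by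
    intro j; induction j with
    | zero => simp
    | succ j ih => rw [pow_succ, ← mul_assoc, ih, hd]
  have key : ∀ i j : ℕ, n ≤ i ∨ n ≤ j → d * (X ^ i * Y ^ j) = 0 := by
    intro i j hij
    rcases hij with hi | hj
    · have e1 : X ^ i = X ^ n * X ^ (i - n) := by rw [← pow_add]; congr 1; omega
      rw [e1, mul_assoc, ← mul_assoc d, hX, zero_mul]
    · have e1 : Y ^ j = Y ^ n * Y ^ (j - n) := by rw [← pow_add]; congr 1; omega
      have e2 : X ^ i * (Y ^ n * Y ^ (j-n)) = Y ^ n * (X ^ i * Y ^ (j-n)) := by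
        rw [← mul_assoc, (hC.pow_pow i n).eq, mul_assoc]
      rw [e1, e2, ← mul_assoc, hY, zero_mul]
  calc d = d * (X + Y) ^ (2 * n + 1) := (hpow _).symm
    _ = d * (∑ m ∈ Finset.range (2*n+1+1), X ^ m * Y ^ (2*n+1-m) * (Nat.choose (2*n+1) m : T)) := by
        rw [hC.add_pow]
    _ = ∑ m ∈ Finset.range (2*n+1+1), (d * (X ^ m * Y ^ (2*n+1-m))) * (Nat.choose (2*n+1) m : T) := by
        rw [Finset.mul_sum]
        exact Finset.sum_congr rfl (fun m _ => by rw [← mul_assoc, ← mul_assoc])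
    _ = 0 := by
        apply Finset.sum_eq_zero
        intro m hm
        rw [key m (2*n+1-m) (by
          rcases le_or_gt n m with h | h
          · exact Or.inl h
          · right; omega), zero_mul]

end DuWang

/-- Context of a triangular ring: idempotents `e, f = 1-e` with `f*T*e = 0`,
and `M = eTf` faithful on both sides. -/
structure Tri (T : Type*) [Ring T] where
  e : T
  f : T
  hef1 : e + f = 1
  he : e * e = e
  hff : f * f = f
  hef : e * f = 0
  hfe : f * e = 0
  htri : ∀ g : T, f * g * e = 0
  faithL : ∀ a : T, a = e * a * e → (∀ m : T, m = e * m * f → a * m = 0) → a = 0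
  faithR : ∀ b : T, b = f * b * f → (∀ m : T, m = e * m * f → m * b = 0) → b = 0

namespace Tri

open DuWang

variable {T : Type*} [Ring T] (C : Tri T)

def IsA (x : T) : Prop := C.e * x = x ∧ x * C.e = x
def IsB (x : T) : Prop := C.f * x = x ∧ x * C.f = x
def IsM (x : T) : Prop := C.e * x = x ∧ x * C.f = x

variable {C}

lemma isA_e : C.IsA C.e := ⟨C.he, C.he⟩
lemma isB_f : C.IsB C.f := ⟨C.hff, C.hff⟩

lemma isA_zero : C.IsA (0:T) := ⟨mul_zero _, zero_mul _⟩
lemma isB_zero : C.IsB (0:T) := ⟨mul_zero _, zero_mul _⟩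
lemma isM_zero : C.IsM (0:T) := ⟨mul_zero _, zero_mul _⟩

lemma IsA.add {x y : T} (hx : C.IsA x) (hy : C.IsA y) : C.IsA (x+y) :=
  ⟨by rw [mul_add, hx.1, hy.1], by rw [add_mul, hx.2, hy.2]⟩
lemma IsB.add {x y : T} (hx : C.IsB x) (hy : C.IsB y) : C.IsB (x+y) :=
  ⟨by rw [mul_add, hx.1, hy.1], by rw [add_mul, hx.2, hy.2]⟩
lemma IsM.add {x y : T} (hx : C.IsM x) (hy : C.IsM y) : C.IsM (x+y) :=
  ⟨by rw [mul_add, hx.1, hy.1], by rw [add_mul, hx.2, hy.2]⟩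
lemma IsA.neg {x : T} (hx : C.IsA x) : C.IsA (-x) :=
  ⟨by rw [mul_neg, hx.1], by rw [neg_mul, hx.2]⟩
lemma IsB.neg {x : T} (hx : C.IsB x) : C.IsB (-x) :=
  ⟨by rw [mul_neg, hx.1], by rw [neg_mul, hx.2]⟩
lemma IsM.neg {x : T} (hx : C.IsM x) : C.IsM (-x) :=
  ⟨by rw [mul_neg, hx.1], by rw [neg_mul, hx.2]⟩
lemma IsA.sub {x y : T} (hx : C.IsA x) (hy : C.IsA y) : C.IsA (x-y) := by
  rw [sub_eq_add_neg]; exact hx.add hy.neg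
lemma IsB.sub {x y : T} (hx : C.IsB x) (hy : C.IsB y) : C.IsB (x-y) := by
  rw [sub_eq_add_neg]; exact hx.add hy.neg
lemma IsM.sub {x y : T} (hx : C.IsM x) (hy : C.IsM y) : C.IsM (x-y) := by
  rw [sub_eq_add_neg]; exact hx.add hy.neg

lemma IsA.af {x : T} (hx : C.IsA x) : x * C.f = 0 := by
  rw [← hx.2, mul_assoc, C.hef, mul_zero]
lemma IsA.fa {x : T} (hx : C.IsA x) : C.f * x = 0 := by
  rw [← hx.1, ← mul_assoc, C.hfe, zero_mul]
lemma IsB.be {x : T} (hx : C.IsB x) : x * C.e = 0 := by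
  rw [← hx.2, mul_assoc, C.hfe, mul_zero]
lemma IsB.eb {x : T} (hx : C.IsB x) : C.e * x = 0 := by
  rw [← hx.1, ← mul_assoc, C.hef, zero_mul]
lemma IsM.me {x : T} (hx : C.IsM x) : x * C.e = 0 := by
  rw [← hx.2, mul_assoc, C.hfe, mul_zero]
lemma IsM.fm {x : T} (hx : C.IsM x) : C.f * x = 0 := by
  rw [← hx.1, ← mul_assoc, C.hfe, zero_mul]

lemma IsA.mulA {x y : T} (hx : C.IsA x) (hy : C.IsA y) : C.IsA (x*y) :=
  ⟨by rw [← mul_assoc, hx.1], by rw [mul_assoc, hy.2]⟩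
lemma IsB.mulB {x y : T} (hx : C.IsB x) (hy : C.IsB y) : C.IsB (x*y) :=
  ⟨by rw [← mul_assoc, hx.1], by rw [mul_assoc, hy.2]⟩
lemma IsA.mulM {x m : T} (hx : C.IsA x) (hm : C.IsM m) : C.IsM (x*m) :=
  ⟨by rw [← mul_assoc, hx.1], by rw [mul_assoc, hm.2]⟩
lemma IsM.mulB {m y : T} (hm : C.IsM m) (hy : C.IsB y) : C.IsM (m*y) :=
  ⟨by rw [← mul_assoc, hm.1], by rw [mul_assoc, hy.2]⟩

lemma IsA.mulB_zero {x y : T} (hx : C.IsA x) (hy : C.IsB y) : x * y = 0 := by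
  rw [← hy.1, ← mul_assoc, hx.af, zero_mul]
lemma IsB.mulA_zero {y x : T} (hy : C.IsB y) (hx : C.IsA x) : y * x = 0 := by
  rw [← hx.1, ← mul_assoc, hy.be, zero_mul]
lemma IsM.mulA_zero {m x : T} (hm : C.IsM m) (hx : C.IsA x) : m * x = 0 := by
  rw [← hx.1, ← mul_assoc, hm.me, zero_mul]
lemma IsM.mulM_zero {m n : T} (hm : C.IsM m) (hn : C.IsM n) : m * n = 0 := by
  rw [← hn.1, ← mul_assoc, hm.me, zero_mul]
lemma IsB.mulM_zero {y m : T} (hy : C.IsB y) (hm : C.IsM m) : y * m = 0 := by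
  rw [← hm.1, ← mul_assoc, hy.be, zero_mul]

lemma isA_iff {x : T} : C.IsA x ↔ x = C.e * x * C.e := by
  constructor
  · intro h; rw [h.1, h.2]
  · intro h
    constructor
    · rw [h, ← mul_assoc, ← mul_assoc, C.he]
    · rw [h, mul_assoc, mul_assoc, C.he, ← mul_assoc]
lemma isB_iff {x : T} : C.IsB x ↔ x = C.f * x * C.f := by
  constructor
  · intro h; rw [h.1, h.2]
  · intro h
    constructor
    · rw [h, ← mul_assoc, ← mul_assoc, C.hff]
    · rw [h, mul_assoc, mul_assoc, C.hff, ← mul_assoc]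
lemma isM_iff {x : T} : C.IsM x ↔ x = C.e * x * C.f := by
  constructor
  · intro h; rw [h.1, h.2]
  · intro h
    constructor
    · rw [h, ← mul_assoc, ← mul_assoc, C.he]
    · rw [h, mul_assoc, mul_assoc, C.hff, ← mul_assoc]

lemma isA_ee {x : T} : C.IsA (C.e * x * C.e) :=
  ⟨by rw [← mul_assoc, ← mul_assoc, C.he], by rw [mul_assoc (C.e * x), C.he]⟩
lemma isB_ff {x : T} : C.IsB (C.f * x * C.f) :=
  ⟨by rw [← mul_assoc, ← mul_assoc, C.hff], by rw [mul_assoc (C.f * x), C.hff]⟩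
lemma isM_ef {x : T} : C.IsM (C.e * x * C.f) :=
  ⟨by rw [← mul_assoc, ← mul_assoc, C.he], by rw [mul_assoc (C.e * x), C.hff]⟩

/-- Peirce decomposition. -/
lemma peirce (x : T) : x = C.e * x * C.e + C.e * x * C.f + C.f * x * C.f := by
  have h1 : (C.e + C.f) * x * (C.e + C.f) = x := by rw [C.hef1, one_mul, mul_one]
  have h2 : (C.e + C.f) * x * (C.e + C.f)
      = C.e * x * C.e + C.e * x * C.f + (C.f * x * C.e + C.f * x * C.f) := by noncomm_ring
  rw [C.htri x, zero_add] at h2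
  exact h1.symm.trans h2

/-- Extraction of Peirce components from a vanishing sum. -/
lemma three_zero {u v w : T} (hu : C.IsA u) (hv : C.IsM v) (hw : C.IsB w)
    (h : u + v + w = 0) : u = 0 ∧ v = 0 ∧ w = 0 := by
  have h1 : (u + v + w) * C.e = u := by
    rw [add_mul, add_mul, hu.2, hv.me, hw.be, add_zero, add_zero]
  have h2 : C.f * (u + v + w) = w := by
    rw [mul_add, mul_add, hu.fa, hv.fm, hw.1, zero_add, zero_add]
  have hu0 : u = 0 := by rw [← h1, h, zero_mul]
  have hw0 : w = 0 := by rw [← h2, h, mul_zero]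
  refine ⟨hu0, ?_, hw0⟩
  have := h; rw [hu0, hw0, zero_add, add_zero] at this; exact this

lemma isA_iterComm {x a : T} (hx : C.IsA x) (ha : C.IsA a) :
    ∀ i, C.IsA (iterComm i x a) := by
  intro i; induction i with
  | zero => exact hx
  | succ i ih => exact (ih.mulA ha).sub (ha.mulA ih)

lemma isB_iterComm {x b : T} (hx : C.IsB x) (hb : C.IsB b) :
    ∀ i, C.IsB (iterComm i x b) := by
  intro i; induction i with
  | zero => exact hx
  | succ i ih => exact (ih.mulB hb).sub (hb.mulB ih)

lemma isM_mseq {a m b P Q S : T} (ha : C.IsA a) (hm : C.IsM m) (hb : C.IsB b)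
    (hP : C.IsA P) (hQ : C.IsM Q) (hS : C.IsB S) :
    ∀ j, C.IsM (DuWang.mseq a m b P Q S j) := by
  intro j; induction j with
  | zero => exact hQ
  | succ j ih =>
    rw [DuWang.mseq_succ]
    exact ((((isA_iterComm hP ha j).mulM hm).sub
      (hm.mulB (isB_iterComm hS hb j))).add (ih.mulB hb)).sub (ha.mulM ih)

/-- The master decomposition of the iterated commutator with `t = a + m + b`. -/
lemma bracket_decomp {a m b P Q S : T} (ha : C.IsA a) (hm : C.IsM m) (hb : C.IsB b)
    (hP : C.IsA P) (hQ : C.IsM Q) (hS : C.IsB S) :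
    ∀ j, iterComm j (P + Q + S) (a + m + b) =
      iterComm j P a + DuWang.mseq a m b P Q S j + iterComm j S b := by
  intro j; induction j with
  | zero => rfl
  | succ j ih =>
    rw [iterComm_succ, ih]
    have hAj := isA_iterComm hP ha j
    have hMj := isM_mseq ha hm hb hP hQ hS j
    have hBj := isB_iterComm hS hb j
    set Aj := iterComm j P a
    set Mj := DuWang.mseq a m b P Q S j
    set Bj := iterComm j S b
    have expand : (Aj + Mj + Bj) * (a + m + b) - (a + m + b) * (Aj + Mj + Bj)
        = (Aj * a - a * Aj) + (Aj * m - m * Bj + Mj * b - a * Mj) + (Bj * b - b * Bj)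
          + ((Aj * b + Mj * a + Mj * m + Bj * a + Bj * m)
            - (a * Bj + m * Aj + m * Mj + b * Aj + b * Mj)) := by noncomm_ring
    rw [expand, hAj.mulB_zero hb, hMj.mulA_zero ha, hMj.mulM_zero hm, hBj.mulA_zero ha,
      hBj.mulM_zero hm, ha.mulB_zero hBj, hm.mulA_zero hAj, hm.mulM_zero hMj,
      hb.mulA_zero hAj, hb.mulM_zero hMj]
    simp only [add_zero, zero_add, sub_zero, iterComm_succ, mseq_succ]
    rfl

lemma dropE {x a : T} (hx : C.IsA x) (ha : C.IsA a) :
    ∀ i, iterComm i x (a + C.e) = iterComm i x a := by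
  intro i; induction i with
  | zero => rfl
  | succ i ih =>
    have hXi := isA_iterComm hx ha i
    rw [iterComm_succ, ih, iterComm_succ, mul_add, add_mul, hXi.2, hXi.1]
    abel

lemma dropF {y b : T} (hy : C.IsB y) (hb : C.IsB b) :
    ∀ i, iterComm i y (b + C.f) = iterComm i y b := by
  intro i; induction i with
  | zero => rfl
  | succ i ih =>
    have hXi := isB_iterComm hy hb i
    rw [iterComm_succ, ih, iterComm_succ, mul_add, add_mul, hXi.2, hXi.1]
    abel

lemma IsA.pow_mulM {x m : T} (hx : C.IsA x) (hm : C.IsM m) :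
    ∀ j, C.IsM (x^j * m) := by
  intro j; induction j with
  | zero => rw [pow_zero, one_mul]; exact hm
  | succ j ih => rw [pow_succ', mul_assoc]; exact hx.mulM ih

lemma IsM.mul_powB {m y : T} (hm : C.IsM m) (hy : C.IsB y) :
    ∀ j, C.IsM (m * y^j) := by
  intro j; induction j with
  | zero => rw [pow_zero, mul_one]; exact hm
  | succ j ih => rw [pow_succ, ← mul_assoc]; exact ih.mulB hy

lemma mseq_a00 (a P Q S : T) : ∀ j, mseq a 0 0 P Q S j = (-a)^j * Q := by
  intro j; induction j with
  | zero => simp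
  | succ j ih =>
    rw [mseq_succ, ih, pow_succ' (-a) j, mul_assoc]
    noncomm_ring

lemma mseq_b00 (b P Q S : T) : ∀ j, mseq 0 0 b P Q S j = Q * b^j := by
  intro j; induction j with
  | zero => simp
  | succ j ih =>
    rw [mseq_succ, ih, pow_succ, ← mul_assoc]
    noncomm_ring

lemma mseq_af {a P Q S : T} (ha : C.IsA a) (hQ : C.IsM Q) :
    ∀ j, mseq a 0 C.f P Q S j = (C.e - a)^j * Q := by
  intro j; induction j with
  | zero => simp
  | succ j ih =>
    have hX : C.IsM ((C.e - a)^j * Q) := (isA_e.sub ha).pow_mulM hQ j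
    rw [mseq_succ, ih, mul_zero, zero_mul, zero_sub, neg_zero, zero_add,
      hX.2, pow_succ' (C.e - a) j, mul_assoc, sub_mul, hX.1]

lemma mseq_e0b {b P Q S : T} (hb : C.IsB b) (hQ : C.IsM Q) :
    ∀ j, mseq C.e 0 b P Q S j = Q * (b - C.f)^j := by
  intro j; induction j with
  | zero => simp
  | succ j ih =>
    have hX : C.IsM (Q * (b - C.f)^j) := hQ.mul_powB (hb.sub isB_f) j
    rw [mseq_succ, ih, mul_zero, zero_mul, zero_sub, neg_zero, zero_add,
      hX.1, pow_succ, ← mul_assoc, mul_sub, hX.2]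

lemma isA_sum {ι : Type*} {s : Finset ι} {g : ι → T} (h : ∀ i ∈ s, C.IsA (g i)) :
    C.IsA (∑ i ∈ s, g i) :=
  ⟨by rw [Finset.mul_sum]; exact Finset.sum_congr rfl (fun i hi => (h i hi).1),
   by rw [Finset.sum_mul]; exact Finset.sum_congr rfl (fun i hi => (h i hi).2)⟩

lemma isB_sum {ι : Type*} {s : Finset ι} {g : ι → T} (h : ∀ i ∈ s, C.IsB (g i)) :
    C.IsB (∑ i ∈ s, g i) :=
  ⟨by rw [Finset.mul_sum]; exact Finset.sum_congr rfl (fun i hi => (h i hi).1),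
   by rw [Finset.sum_mul]; exact Finset.sum_congr rfl (fun i hi => (h i hi).2)⟩

lemma isA_pow_mul {x y : T} (hx : C.IsA x) (hy : C.IsA y) : ∀ j, C.IsA (x^j * y) := by
  intro j; induction j with
  | zero => rw [pow_zero, one_mul]; exact hy
  | succ j ih => rw [pow_succ', mul_assoc]; exact hx.mulA ih

lemma isB_mul_pow {y x : T} (hy : C.IsB y) (hx : C.IsB x) : ∀ j, C.IsB (y * x^j) := by
  intro j; induction j with
  | zero => rw [pow_zero, mul_one]; exact hy
  | succ j ih => rw [pow_succ, ← mul_assoc]; exact ih.mulB hx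

/-! Sandwich lemmas: computing `e * (x*y) * f` for various corner shapes. -/

lemma sandwich_xm {x m : T} (hm : C.IsM m) : C.e * (x * m) * C.f = (C.e * x * C.e) * m := by
  have h1 : C.e * (x * m) * C.f = C.e * (x * m) := by
    rw [mul_assoc C.e (x*m), mul_assoc x m, hm.2]
  have h2 : (C.e * x * C.e) * m = C.e * (x * m) := by
    rw [mul_assoc (C.e * x), hm.1, mul_assoc]
  rw [h1, h2]

lemma sandwich_mx {m x : T} (hm : C.IsM m) : C.e * (m * x) * C.f = m * (C.f * x * C.f) := by
  have h1 : C.e * (m * x) * C.f = (m * x) * C.f := by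
    rw [← mul_assoc, hm.1]
  have h2 : m * (C.f * x * C.f) = (m * x) * C.f := by
    rw [← mul_assoc, ← mul_assoc, hm.2, mul_assoc]
  rw [h1, h2, mul_assoc]

lemma sandwich_em {x : T} : C.e * (C.e * x) * C.f = C.e * x * C.f := by
  rw [← mul_assoc, C.he]

lemma sandwich_xe {x : T} : C.e * (x * C.e) * C.f = 0 := by
  rw [mul_assoc C.e (x * C.e), mul_assoc x, C.hef, mul_zero, mul_zero]

lemma sandwich_fx {x : T} : C.e * (C.f * x) * C.f = 0 := by
  rw [← mul_assoc, C.hef, zero_mul, zero_mul]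

lemma sandwich_xf {x : T} : C.e * (x * C.f) * C.f = C.e * x * C.f := by
  rw [mul_assoc C.e (x * C.f), mul_assoc x, C.hff, ← mul_assoc]

section Central
variable {z : T}

lemma cen_ezf (hz : ∀ x : T, z * x = x * z) : C.e * z * C.f = 0 := by
  rw [mul_assoc, hz C.f, ← mul_assoc, C.hef, zero_mul]

lemma cen_split (hz : ∀ x : T, z * x = x * z) : z = C.e * z * C.e + C.f * z * C.f := by
  have h := peirce (C := C) z
  rw [cen_ezf hz, add_zero] at h
  exact h

lemma cen_moveL (hz : ∀ x : T, z * x = x * z) {m : T} (hm : C.IsM m) : (C.e * z * C.e) * m = m * (C.f * z * C.f) := by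
  have h1 : (C.e * z * C.e) * m = m * z := by
    rw [mul_assoc (C.e * z), hm.1, mul_assoc, hz m, ← mul_assoc, hm.1]
  have h2 : m * (C.f * z * C.f) = m * z := by
    rw [← mul_assoc, ← mul_assoc, hm.2, mul_assoc, hz C.f, ← mul_assoc, hm.2]
  rw [h1, h2]

lemma cen_cornerA (hz : ∀ x : T, z * x = x * z) {x : T} (hx : C.IsA x) : (C.e * z * C.e) * x = x * (C.e * z * C.e) := by
  have h1 : (C.e * z * C.e) * x = x * z := by
    rw [mul_assoc (C.e * z), hx.1, mul_assoc, hz x, ← mul_assoc, hx.1]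
  have h2 : x * (C.e * z * C.e) = x * z := by
    rw [← mul_assoc, ← mul_assoc, hx.2, ← hz x, mul_assoc, hx.2, hz x]
  rw [h1, h2]

lemma cen_cornerB (hz : ∀ x : T, z * x = x * z) {y : T} (hy : C.IsB y) : (C.f * z * C.f) * y = y * (C.f * z * C.f) := by
  have h1 : (C.f * z * C.f) * y = y * z := by
    rw [mul_assoc (C.f * z), hy.1, mul_assoc, hz y, ← mul_assoc, hy.1]
  have h2 : y * (C.f * z * C.f) = y * z := by
    rw [← mul_assoc, ← mul_assoc, hy.2, ← hz y, mul_assoc, hy.2, hz y]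
  rw [h1, h2]

lemma cen_zeroA (hz : ∀ x : T, z * x = x * z) (h : C.e * z * C.e = 0) : z = 0 := by
  have hsplit := cen_split (C := C) hz
  rw [h, zero_add] at hsplit
  have hB : C.f * z * C.f = 0 := by
    apply C.faithR
    · exact isB_iff.mp isB_ff
    · intro m hm
      have hm' : C.IsM m := isM_iff.mpr hm
      have h2 : m * (C.f * z * C.f) = m * z := by
        rw [← mul_assoc, ← mul_assoc, hm'.2, mul_assoc, hz C.f, ← mul_assoc, hm'.2]
      rw [h2, ← hz m, hsplit, mul_assoc (C.f * z), hm'.fm, mul_zero]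
  rw [hsplit, hB]

end Central

/-- uniqueness of a central element with a given `A`-corner. -/
lemma cen_eqA {z z' : T} (hz : ∀ x : T, z * x = x * z) (hz' : ∀ x : T, z' * x = x * z')
    (h : C.e * z * C.e = C.e * z' * C.e) : z = z' := by
  have hc : ∀ x : T, (z - z') * x = x * (z - z') := by
    intro x; rw [sub_mul, mul_sub, hz x, hz' x]
  have h0 : C.e * (z - z') * C.e = 0 := by
    rw [mul_sub, sub_mul, h, sub_self]
  have := cen_zeroA (C := C) hc h0
  exact sub_eq_zero.mp this

end Tri

namespace DuWang

variable {T : Type*} [Ring T]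

lemma neg_pow_cancel_left (x d : T) (n : ℕ) (h : (-x)^n * d = 0) : x^n * d = 0 := by
  rcases Nat.even_or_odd n with h' | h'
  · rwa [h'.neg_pow] at h
  · rw [h'.neg_pow, neg_mul, neg_eq_zero] at h; exact h

lemma neg_pow_cancel_right (x d : T) (n : ℕ) (h : d * (-x)^n = 0) : d * x^n = 0 := by
  rcases Nat.even_or_odd n with h' | h'
  · rwa [h'.neg_pow] at h
  · rw [h'.neg_pow, mul_neg, neg_eq_zero] at h; exact h

/-- "pumping" an identity `∑ c^(K-i) [δ,a]_{i+r} = 0` to level `r+1` by bracketing with `a`. -/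
lemma pump_left (a c δ : T) (hc : c * a = a * c) (K r : ℕ)
    (h : ∑ i ∈ Finset.range (K+1), c^(K-i) * iterComm (i+r) δ a = 0) :
    ∑ i ∈ Finset.range (K+1), c^(K-i) * iterComm (i+(r+1)) δ a = 0 := by
  have hC : Commute c a := hc
  have e1 : ∀ i ∈ Finset.range (K+1), c^(K-i) * iterComm (i+(r+1)) δ a
      = (c^(K-i) * iterComm (i+r) δ a) * a - a * (c^(K-i) * iterComm (i+r) δ a) := by
    intro i _
    have e : i + (r+1) = (i+r)+1 := by omega
    rw [e, iterComm_succ, mul_sub, ← mul_assoc, ← mul_assoc, ((hC.pow_left (K-i)).eq),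
      mul_assoc a]
  rw [Finset.sum_congr rfl e1, Finset.sum_sub_distrib, ← Finset.sum_mul, ← Finset.mul_sum, h,
    zero_mul, mul_zero, sub_zero]

lemma pump_right (b c δ : T) (hc : c * b = b * c) (K r : ℕ)
    (h : ∑ i ∈ Finset.range (K+1), iterComm (i+r) δ b * c^(K-i) = 0) :
    ∑ i ∈ Finset.range (K+1), iterComm (i+(r+1)) δ b * c^(K-i) = 0 := by
  have hC : Commute c b := hc
  have e1 : ∀ i ∈ Finset.range (K+1), iterComm (i+(r+1)) δ b * c^(K-i)
      = (iterComm (i+r) δ b * c^(K-i)) * b - b * (iterComm (i+r) δ b * c^(K-i)) := by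
    intro i _
    have e : i + (r+1) = (i+r)+1 := by omega
    rw [e, iterComm_succ, sub_mul, mul_assoc, mul_assoc, ← ((hC.pow_left (K-i)).eq), ← mul_assoc]
  rw [Finset.sum_congr rfl e1, Finset.sum_sub_distrib, ← Finset.sum_mul, ← Finset.mul_sum, h,
    zero_mul, mul_zero, sub_zero]

end DuWang

section Main
open DuWang Tri Finset

set_option maxHeartbeats 2000000 in
theorem duwang_aux {R : Type*} [CommRing R] {T : Type*} [Ring T] [Algebra R T] (C : Tri T)
    (htf : ∀ t : T, t + t = 0 → t = 0) (k : ℕ) (hk : 2 ≤ k)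
    (hZAk : ∀ c : T,
      (c = C.e * c * C.e ∧ ∀ x : T, x = C.e * x * C.e → iterComm k c x = 0) ↔
      (∃ z : T, (∀ x : T, z * x = x * z) ∧ c = C.e * z * C.e))
    (hZBk : ∀ c : T,
      (c = C.f * c * C.f ∧ ∀ y : T, y = C.f * y * C.f → iterComm k c y = 0) ↔
      (∃ z : T, (∀ x : T, z * x = x * z) ∧ c = C.f * z * C.f))
    (hZT : ∃ m0 : T, m0 = C.e * m0 * C.f ∧
      ∀ z : T, (∀ x : T, z * x = x * z) ↔
        ∃ a b : T, (a = C.e * a * C.e ∧ ∀ x : T, x = C.e * x * C.e → a * x = x * a) ∧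
          (b = C.f * b * C.f ∧ ∀ y : T, y = C.f * y * C.f → b * y = y * b) ∧
          a * m0 = m0 * b ∧ z = a + b)
    (Θ : T →ₗ[R] T) (hΘ : ∀ t : T, iterComm k (Θ t) t = 0) :
    ∃ lam : T, (∀ x : T, lam * x = x * lam) ∧
      ∃ ζ : T →ₗ[R] T, (∀ t x : T, ζ t * x = x * ζ t) ∧
        ∀ t : T, Θ t = lam * t + ζ t := by
  classical
  obtain ⟨m0, hm0raw, hZTiff⟩ := hZT
  have hm0 : C.IsM m0 := isM_iff.mpr hm0raw
  have hk1 : 1 ≤ k := by omega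
  obtain ⟨K, hkK⟩ : ∃ K, k = K + 1 := ⟨k - 1, by omega⟩
  have hK1 : 1 ≤ K := by omega
  -- ## The master identity: Peirce components of [Θ t, t]_k = 0 for t = a + m + b
  have KEY : ∀ a m b : T, C.IsA a → C.IsM m → C.IsB b →
      iterComm k (C.e*Θ a*C.e + C.e*Θ m*C.e + C.e*Θ b*C.e) a = 0
      ∧ mseq a m b (C.e*Θ a*C.e + C.e*Θ m*C.e + C.e*Θ b*C.e)
          (C.e*Θ a*C.f + C.e*Θ m*C.f + C.e*Θ b*C.f)
          (C.f*Θ a*C.f + C.f*Θ m*C.f + C.f*Θ b*C.f) k = 0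
      ∧ iterComm k (C.f*Θ a*C.f + C.f*Θ m*C.f + C.f*Θ b*C.f) b = 0 := by
    intro a m b ha hm hb
    have hadd : Θ (a+m+b) = Θ a + Θ m + Θ b := by rw [map_add, map_add]
    have hPsum : C.e*Θ (a+m+b)*C.e = C.e*Θ a*C.e + C.e*Θ m*C.e + C.e*Θ b*C.e := by
      rw [hadd]; noncomm_ring
    have hQsum : C.e*Θ (a+m+b)*C.f = C.e*Θ a*C.f + C.e*Θ m*C.f + C.e*Θ b*C.f := by
      rw [hadd]; noncomm_ring
    have hSsum : C.f*Θ (a+m+b)*C.f = C.f*Θ a*C.f + C.f*Θ m*C.f + C.f*Θ b*C.f := by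
      rw [hadd]; noncomm_ring
    have hx : Θ (a+m+b) = C.e*Θ (a+m+b)*C.e + C.e*Θ (a+m+b)*C.f + C.f*Θ (a+m+b)*C.f :=
      peirce _
    have hdec := bracket_decomp (C := C) ha hm hb
      (isA_ee (x := Θ (a+m+b))) (isM_ef (x := Θ (a+m+b))) (isB_ff (x := Θ (a+m+b))) k
    rw [← hx, hΘ (a+m+b)] at hdec
    have h3 := three_zero (C := C)
      (isA_iterComm isA_ee ha k) (isM_mseq ha hm hb isA_ee isM_ef isB_ff k)
      (isB_iterComm isB_ff hb k) hdec.symm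
    refine ⟨?_, ?_, ?_⟩
    · rw [← hPsum]; exact h3.1
    · rw [← hPsum, ← hQsum, ← hSsum]; exact h3.2.1
    · rw [← hSsum]; exact h3.2.2
  -- ## degree-one identities from idempotents
  have ce : Θ C.e * C.e = C.e * Θ C.e := idem_comm k hk1 _ _ C.he (hΘ C.e)
  have cf : Θ C.f * C.f = C.f * Θ C.f := idem_comm k hk1 _ _ C.hff (hΘ C.f)
  have comm_em : ∀ m : T, C.IsM m →
      (Θ C.e * m + Θ m * C.e + Θ m * m) - (m * Θ C.e + C.e * Θ m + m * Θ m) = 0 := by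
    intro m hm
    have hu : (C.e + m) * (C.e + m) = C.e + m := by
      have expand : (C.e + m) * (C.e + m) = C.e*C.e + C.e*m + m*C.e + m*m := by noncomm_ring
      rw [expand, C.he, hm.1, hm.me, hm.mulM_zero hm, add_zero, add_zero]
    have h1 := idem_comm k hk1 _ _ hu (hΘ (C.e + m))
    rw [map_add] at h1
    have expand : (Θ C.e + Θ m) * (C.e + m) - (C.e + m) * (Θ C.e + Θ m)
        = (Θ C.e * C.e - C.e * Θ C.e)
          + ((Θ C.e * m + Θ m * C.e + Θ m * m) - (m * Θ C.e + C.e * Θ m + m * Θ m)) := by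
      noncomm_ring
    have h2 : (Θ C.e + Θ m) * (C.e + m) - (C.e + m) * (Θ C.e + Θ m) = 0 :=
      sub_eq_zero.mpr h1
    rw [expand, ce, sub_self, zero_add] at h2
    exact h2
  have comm_fm : ∀ m : T, C.IsM m →
      (Θ C.f * m + Θ m * C.f + Θ m * m) - (m * Θ C.f + C.f * Θ m + m * Θ m) = 0 := by
    intro m hm
    have hu : (C.f + m) * (C.f + m) = C.f + m := by
      have expand : (C.f + m) * (C.f + m) = C.f*C.f + C.f*m + m*C.f + m*m := by noncomm_ring
      rw [expand, C.hff, hm.fm, hm.2, hm.mulM_zero hm, add_zero, add_zero]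
    have h1 := idem_comm k hk1 _ _ hu (hΘ (C.f + m))
    rw [map_add] at h1
    have expand : (Θ C.f + Θ m) * (C.f + m) - (C.f + m) * (Θ C.f + Θ m)
        = (Θ C.f * C.f - C.f * Θ C.f)
          + ((Θ C.f * m + Θ m * C.f + Θ m * m) - (m * Θ C.f + C.f * Θ m + m * Θ m)) := by
      noncomm_ring
    have h2 : (Θ C.f + Θ m) * (C.f + m) - (C.f + m) * (Θ C.f + Θ m) = 0 :=
      sub_eq_zero.mpr h1
    rw [expand, cf, sub_self, zero_add] at h2
    exact h2
  have comm_m : ∀ m : T, C.IsM m → Θ m * m = m * Θ m := by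
    intro m hm
    have D1 := comm_em m hm
    have D2 := comm_em (-m) (hm.neg)
    rw [map_neg] at D2
    have hsum : (Θ m * m - m * Θ m) + (Θ m * m - m * Θ m)
        = ((Θ C.e * m + Θ m * C.e + Θ m * m) - (m * Θ C.e + C.e * Θ m + m * Θ m))
          + ((Θ C.e * (-m) + (-Θ m) * C.e + (-Θ m) * (-m))
            - ((-m) * Θ C.e + C.e * (-Θ m) + (-m) * (-Θ m))) := by noncomm_ring
    rw [D1, D2, add_zero] at hsum
    exact sub_eq_zero.mp (htf _ hsum)
  have comm_em' : ∀ m : T, C.IsM m →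
      Θ C.e * m + Θ m * C.e = m * Θ C.e + C.e * Θ m := by
    intro m hm
    have D1 := comm_em m hm
    have hc := comm_m m hm
    have expand : (Θ C.e * m + Θ m * C.e) - (m * Θ C.e + C.e * Θ m)
        = ((Θ C.e * m + Θ m * C.e + Θ m * m) - (m * Θ C.e + C.e * Θ m + m * Θ m))
          + (m * Θ m - Θ m * m) := by noncomm_ring
    rw [D1, hc, sub_self, add_zero] at expand
    exact sub_eq_zero.mp expand
  have comm_fm' : ∀ m : T, C.IsM m →
      Θ C.f * m + Θ m * C.f = m * Θ C.f + C.f * Θ m := by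
    intro m hm
    have D1 := comm_fm m hm
    have hc := comm_m m hm
    have expand : (Θ C.f * m + Θ m * C.f) - (m * Θ C.f + C.f * Θ m)
        = ((Θ C.f * m + Θ m * C.f + Θ m * m) - (m * Θ C.f + C.f * Θ m + m * Θ m))
          + (m * Θ m - Θ m * m) := by noncomm_ring
    rw [D1, hc, sub_self, add_zero] at expand
    exact sub_eq_zero.mp expand
  -- ## component identities
  have hQe : C.e * Θ C.e * C.f = 0 := by
    rw [← ce, mul_assoc, C.hef, mul_zero]
  have hQf : C.e * Θ C.f * C.f = 0 := by
    rw [mul_assoc, cf, ← mul_assoc, C.hef, zero_mul]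
  have hQm : ∀ m : T, C.IsM m →
      C.e * Θ m * C.f = (C.e * Θ C.e * C.e) * m - m * (C.f * Θ C.e * C.f) := by
    intro m hm
    have h := congrArg (fun y => C.e * y * C.f) (comm_em' m hm)
    simp only [mul_add, add_mul] at h
    rw [sandwich_xm hm, sandwich_xe, sandwich_mx hm, sandwich_em, add_zero] at h
    exact eq_sub_of_add_eq' h.symm
  have hQm2 : ∀ m : T, C.IsM m →
      C.e * Θ m * C.f = m * (C.f * Θ C.f * C.f) - (C.e * Θ C.f * C.e) * m := by
    intro m hm
    have h := congrArg (fun y => C.e * y * C.f) (comm_fm' m hm)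
    simp only [mul_add, add_mul] at h
    rw [sandwich_xm hm, sandwich_xf, sandwich_mx hm, sandwich_fx, add_zero] at h
    exact eq_sub_of_add_eq' h
  have hI2 : ∀ m : T, C.IsM m → (C.e*Θ m*C.e)*m = m*(C.f*Θ m*C.f) := by
    intro m hm
    have h := congrArg (fun y => C.e * y * C.f) (comm_m m hm)
    beta_reduce at h
    rw [sandwich_xm hm, sandwich_mx hm] at h; exact h
  have hI2p : ∀ m n : T, C.IsM m → C.IsM n →
      (C.e*Θ m*C.e)*n + (C.e*Θ n*C.e)*m = m*(C.f*Θ n*C.f) + n*(C.f*Θ m*C.f) := by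
    intro m n hm hn
    have h := hI2 (m+n) (hm.add hn)
    rw [map_add] at h
    have e1 : C.e*(Θ m + Θ n)*C.e = C.e*Θ m*C.e + C.e*Θ n*C.e := by noncomm_ring
    have e2 : C.f*(Θ m + Θ n)*C.f = C.f*Θ m*C.f + C.f*Θ n*C.f := by noncomm_ring
    rw [e1, e2] at h
    have hh : ((C.e*Θ m*C.e)*n + (C.e*Θ n*C.e)*m) - (m*(C.f*Θ n*C.f) + n*(C.f*Θ m*C.f))
        = ((C.e*Θ m*C.e + C.e*Θ n*C.e)*(m+n) - (m+n)*(C.f*Θ m*C.f + C.f*Θ n*C.f))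
          - ((C.e*Θ m*C.e)*m - m*(C.f*Θ m*C.f))
          - ((C.e*Θ n*C.e)*n - n*(C.f*Θ n*C.f)) := by noncomm_ring
    rw [h, hI2 m hm, hI2 n hn] at hh
    simp only [sub_self, zero_sub, sub_zero, neg_zero] at hh
    exact sub_eq_zero.mp hh
  -- ## Q vanishes on the corners
  have hQa0 : ∀ a : T, C.IsA a → C.e * Θ a * C.f = 0 := by
    intro a ha
    have h1 := (KEY a 0 0 ha isM_zero isB_zero).2.1
    rw [map_zero] at h1
    simp only [mul_zero, zero_mul, add_zero] at h1
    rw [mseq_a00] at h1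
    have h2 := (KEY a 0 C.f ha isM_zero isB_f).2.1
    rw [map_zero] at h2
    simp only [mul_zero, zero_mul, add_zero] at h2
    rw [hQf, add_zero] at h2
    rw [mseq_af (C := C) ha isM_ef] at h2
    refine bezout_left a (C.e - a) _ k ?_ ?_ h2 ?_
    · rw [mul_sub, sub_mul, ha.1, ha.2]
    · exact neg_pow_cancel_left _ _ _ h1
    · rw [add_sub_cancel]; exact (isM_ef (C := C)).1
  have hQb0 : ∀ b : T, C.IsB b → C.e * Θ b * C.f = 0 := by
    intro b hb
    have h1 := (KEY 0 0 b isA_zero isM_zero hb).2.1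
    rw [map_zero] at h1
    simp only [mul_zero, zero_mul, zero_add] at h1
    rw [mseq_b00] at h1
    have h2 := (KEY C.e 0 b isA_e isM_zero hb).2.1
    rw [map_zero] at h2
    simp only [mul_zero, zero_mul, add_zero] at h2
    rw [hQe, zero_add] at h2
    rw [mseq_e0b (C := C) hb isM_ef] at h2
    refine bezout_right b (C.f - b) _ k ?_ h1 ?_ ?_
    · rw [mul_sub, sub_mul, hb.2, hb.1]
    · refine neg_pow_cancel_right _ _ _ ?_
      rw [neg_sub]; exact h2
    · rw [add_sub_cancel]; exact (isM_ef (C := C)).2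
  -- ## k-centrality of the various corner components
  have hPA : ∀ x : T, C.IsA x → iterComm k (C.e*Θ x*C.e) x = 0 := by
    intro x hx
    have h := (KEY x 0 0 hx isM_zero isB_zero).1
    rw [map_zero] at h
    simp only [mul_zero, zero_mul, add_zero] at h
    exact h
  have hPmK : ∀ m x : T, C.IsM m → C.IsA x → iterComm k (C.e*Θ m*C.e) x = 0 := by
    intro m x hm hx
    have h := (KEY x m 0 hx hm isB_zero).1
    rw [map_zero] at h
    simp only [mul_zero, zero_mul, add_zero] at h
    rw [iterComm_add_left, hPA x hx, zero_add] at h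
    exact h
  have hPbK : ∀ b x : T, C.IsB b → C.IsA x → iterComm k (C.e*Θ b*C.e) x = 0 := by
    intro b x hb hx
    have h := (KEY x 0 b hx isM_zero hb).1
    rw [map_zero] at h
    simp only [mul_zero, zero_mul, add_zero] at h
    rw [iterComm_add_left, hPA x hx, zero_add] at h
    exact h
  have hPeK : ∀ x : T, C.IsA x → iterComm k (C.e*Θ C.e*C.e) x = 0 := by
    intro x hx
    have h := (KEY (x + C.e) 0 0 (hx.add isA_e) isM_zero isB_zero).1
    rw [map_zero] at h
    simp only [mul_zero, zero_mul, add_zero] at h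
    have hsplit : C.e*Θ (x+C.e)*C.e = C.e*Θ x*C.e + C.e*Θ C.e*C.e := by
      rw [map_add]; noncomm_ring
    rw [hsplit, iterComm_add_left, dropE (C := C) isA_ee hx k,
      dropE (C := C) isA_ee hx k, hPA x hx, zero_add] at h
    exact h
  have hSB : ∀ y : T, C.IsB y → iterComm k (C.f*Θ y*C.f) y = 0 := by
    intro y hy
    have h := (KEY 0 0 y isA_zero isM_zero hy).2.2
    rw [map_zero] at h
    simp only [mul_zero, zero_mul, zero_add] at h
    exact h
  have hSaK : ∀ a y : T, C.IsA a → C.IsB y → iterComm k (C.f*Θ a*C.f) y = 0 := by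
    intro a y ha hy
    have h := (KEY a 0 y ha isM_zero hy).2.2
    rw [map_zero] at h
    simp only [mul_zero, zero_mul, add_zero] at h
    rw [iterComm_add_left, hSB y hy, add_zero] at h
    exact h
  have hSmK : ∀ m y : T, C.IsM m → C.IsB y → iterComm k (C.f*Θ m*C.f) y = 0 := by
    intro m y hm hy
    have h := (KEY 0 m y isA_zero hm hy).2.2
    rw [map_zero] at h
    simp only [mul_zero, zero_mul, zero_add] at h
    rw [iterComm_add_left, hSB y hy, add_zero] at h
    exact h
  have hSfK : ∀ y : T, C.IsB y → iterComm k (C.f*Θ C.f*C.f) y = 0 := by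
    intro y hy
    have h := (KEY 0 0 (y + C.f) isA_zero isM_zero (hy.add isB_f)).2.2
    rw [map_zero] at h
    simp only [mul_zero, zero_mul, zero_add] at h
    have hsplit : C.f*Θ (y+C.f)*C.f = C.f*Θ y*C.f + C.f*Θ C.f*C.f := by
      rw [map_add]; noncomm_ring
    rw [hsplit, iterComm_add_left, dropF (C := C) isB_ff hy k,
      dropF (C := C) isB_ff hy k, hSB y hy, zero_add] at h
    exact h
  -- ## central witnesses
  have mkA : ∀ c : T, C.IsA c → (∀ x, C.IsA x → iterComm k c x = 0) →
      ∃ z, (∀ x, z*x = x*z) ∧ c = C.e*z*C.e := by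
    intro c hc hcomm
    exact (hZAk c).mp ⟨isA_iff.mp hc, fun x hx => hcomm x (isA_iff.mpr hx)⟩
  have mkB : ∀ c : T, C.IsB c → (∀ y, C.IsB y → iterComm k c y = 0) →
      ∃ z, (∀ x, z*x = x*z) ∧ c = C.f*z*C.f := by
    intro c hc hcomm
    exact (hZBk c).mp ⟨isB_iff.mp hc, fun y hy => hcomm y (isB_iff.mpr hy)⟩
  obtain ⟨z1, hz1c, hz1⟩ := mkA (C.e*Θ C.e*C.e) isA_ee hPeK
  obtain ⟨we, hwec, hwe⟩ := mkB (C.f*Θ C.e*C.f) isB_ff (fun y hy => hSaK C.e y isA_e hy)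
  obtain ⟨zf, hzfc, hzf⟩ := mkA (C.e*Θ C.f*C.e) isA_ee (fun x hx => hPbK C.f x isB_f hx)
  obtain ⟨lam, hlam⟩ : ∃ l : T, l = z1 - we := ⟨_, rfl⟩
  have hlamc : ∀ x : T, lam*x = x*lam := by
    intro x; rw [hlam, sub_mul, mul_sub, hz1c x, hwec x]
  have hlamA : C.e*lam*C.e = C.e*Θ C.e*C.e - C.e*we*C.e := by
    rw [hlam, mul_sub, sub_mul, ← hz1]
  have hQlam : ∀ m : T, C.IsM m → C.e*Θ m*C.f = (C.e*lam*C.e)*m := by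
    intro m hm
    rw [hQm m hm, hlamA, sub_mul]
    congr 1
    rw [hwe]
    exact (cen_moveL (C := C) hwec hm).symm
  -- ## the odd (in m) part of the M-component identity for t = a + m
  have ODD : ∀ a m : T, C.IsA a → C.IsM m →
      (∑ i ∈ Finset.range (K+1), (-a)^(K-i) * (iterComm i (C.e*Θ a*C.e) a * m))
        - (-a)^K * (m * (C.f*Θ a*C.f)) + (-a)^(K+1) * (C.e*Θ m*C.f) = 0 := by
    intro a m ha hm
    have E1 := (KEY a m 0 ha hm isB_zero).2.1
    rw [map_zero] at E1
    simp only [mul_zero, zero_mul, add_zero] at E1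
    have E2 := (KEY a (-m) 0 ha hm.neg isB_zero).2.1
    rw [map_neg, map_zero] at E2
    simp only [mul_zero, zero_mul, add_zero, mul_neg, neg_mul] at E2
    rw [hkK] at E1 E2
    rw [mseq_closed_left] at E1 E2
    have step : ∀ i ∈ Finset.range (K+1),
        (-a)^(K-i) * (iterComm i (C.e*Θ a*C.e + C.e*Θ m*C.e) a * m)
          - (-a)^(K-i) * (iterComm i (C.e*Θ a*C.e + -(C.e*Θ m*C.e)) a * -m)
        = (-a)^(K-i) * (iterComm i (C.e*Θ a*C.e) a * m)
          + (-a)^(K-i) * (iterComm i (C.e*Θ a*C.e) a * m) := by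
      intro i _
      rw [iterComm_add_left, iterComm_add_left, iterComm_neg_left]
      noncomm_ring
    have key : ((∑ i ∈ Finset.range (K+1), (-a)^(K-i) * (iterComm i (C.e*Θ a*C.e) a * m))
        - (-a)^K * (m * (C.f*Θ a*C.f)) + (-a)^(K+1) * (C.e*Θ m*C.f))
        + ((∑ i ∈ Finset.range (K+1), (-a)^(K-i) * (iterComm i (C.e*Θ a*C.e) a * m))
        - (-a)^K * (m * (C.f*Θ a*C.f)) + (-a)^(K+1) * (C.e*Θ m*C.f)) = 0 := by
      have h2 : (-a)^K * (m * (C.f*Θ a*C.f + C.f*Θ m*C.f))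
            - (-a)^K * (-m * (C.f*Θ a*C.f + -(C.f*Θ m*C.f)))
          = (-a)^K * (m * (C.f*Θ a*C.f)) + (-a)^K * (m * (C.f*Θ a*C.f)) := by noncomm_ring
      have h3 : (-a)^(K+1) * (C.e*Θ a*C.f + C.e*Θ m*C.f)
            - (-a)^(K+1) * (C.e*Θ a*C.f + -(C.e*Θ m*C.f))
          = (-a)^(K+1) * (C.e*Θ m*C.f) + (-a)^(K+1) * (C.e*Θ m*C.f) := by noncomm_ring
      calc ((∑ i ∈ Finset.range (K+1), (-a)^(K-i) * (iterComm i (C.e*Θ a*C.e) a * m))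
            - (-a)^K * (m * (C.f*Θ a*C.f)) + (-a)^(K+1) * (C.e*Θ m*C.f))
          + ((∑ i ∈ Finset.range (K+1), (-a)^(K-i) * (iterComm i (C.e*Θ a*C.e) a * m))
            - (-a)^K * (m * (C.f*Θ a*C.f)) + (-a)^(K+1) * (C.e*Θ m*C.f))
          = ((∑ i ∈ Finset.range (K+1), (-a)^(K-i) * (iterComm i (C.e*Θ a*C.e) a * m))
              + (∑ i ∈ Finset.range (K+1), (-a)^(K-i) * (iterComm i (C.e*Θ a*C.e) a * m)))
            - ((-a)^K * (m * (C.f*Θ a*C.f)) + (-a)^K * (m * (C.f*Θ a*C.f)))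
            + ((-a)^(K+1) * (C.e*Θ m*C.f) + (-a)^(K+1) * (C.e*Θ m*C.f)) := by abel
        _ = (∑ i ∈ Finset.range (K+1),
                ((-a)^(K-i) * (iterComm i (C.e*Θ a*C.e + C.e*Θ m*C.e) a * m)
                - (-a)^(K-i) * (iterComm i (C.e*Θ a*C.e + -(C.e*Θ m*C.e)) a * -m)))
            - ((-a)^K * (m * (C.f*Θ a*C.f + C.f*Θ m*C.f))
                - (-a)^K * (-m * (C.f*Θ a*C.f + -(C.f*Θ m*C.f))))
            + ((-a)^(K+1) * (C.e*Θ a*C.f + C.e*Θ m*C.f)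
                - (-a)^(K+1) * (C.e*Θ a*C.f + -(C.e*Θ m*C.f))) := by
            rw [Finset.sum_congr rfl step, Finset.sum_add_distrib, h2, h3]
        _ = ((∑ i ∈ Finset.range (K+1),
                (-a)^(K-i) * (iterComm i (C.e*Θ a*C.e + C.e*Θ m*C.e) a * m))
              - (-a)^K * (m * (C.f*Θ a*C.f + C.f*Θ m*C.f))
              + (-a)^(K+1) * (C.e*Θ a*C.f + C.e*Θ m*C.f))
            - ((∑ i ∈ Finset.range (K+1),
                (-a)^(K-i) * (iterComm i (C.e*Θ a*C.e + -(C.e*Θ m*C.e)) a * -m))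
              - (-a)^K * (-m * (C.f*Θ a*C.f + -(C.f*Θ m*C.f)))
              + (-a)^(K+1) * (C.e*Θ a*C.f + -(C.e*Θ m*C.f))) := by
            rw [Finset.sum_sub_distrib]; abel
        _ = 0 := by rw [E1, E2]; exact sub_zero 0
    exact htf _ key
  -- ## the master A-side identity (GA)
  have GA : ∀ a w : T, C.IsA a → (∀ x, w*x = x*w) → C.f*Θ a*C.f = C.f*w*C.f →
      ∑ i ∈ Finset.range (K+1), (-a)^(K-i)
        * iterComm i (C.e*Θ a*C.e - C.e*lam*C.e*a - C.e*w*C.e) a = 0 := by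
    intro a w ha hwc hw
    have hLa : (C.e*lam*C.e)*a = a*(C.e*lam*C.e) := cen_cornerA (C := C) hlamc ha
    have hWa : (C.e*w*C.e)*a = a*(C.e*w*C.e) := cen_cornerA (C := C) hwc ha
    have hIsδ : C.IsA (C.e*Θ a*C.e - C.e*lam*C.e*a - C.e*w*C.e) :=
      (isA_ee.sub (isA_ee.mulA ha)).sub isA_ee
    have hδstep : ∀ i : ℕ,
        iterComm (i+1) (C.e*Θ a*C.e - C.e*lam*C.e*a - C.e*w*C.e) a
          = iterComm (i+1) (C.e*Θ a*C.e) a := by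
      intro i
      have hcomm1 : (C.e*lam*C.e*a) * a = a * (C.e*lam*C.e*a) := by
        rw [← mul_assoc, ← hLa]
      rw [iterComm_sub_left, iterComm_sub_left, iterComm_of_comm hcomm1 i,
        iterComm_of_comm hWa i, sub_zero, sub_zero]
    apply C.faithL
    · apply isA_iff.mp
      apply isA_sum
      intro i _
      exact isA_pow_mul (C := C) ha.neg (isA_iterComm hIsδ ha i) (K-i)
    · intro m hmraw
      have hm : C.IsM m := isM_iff.mpr hmraw
      have hODD := ODD a m ha hm
      rw [hQlam m hm] at hODD
      rw [Finset.sum_mul]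
      rw [Finset.sum_range_succ' (fun i => ((-a)^(K-i)
        * iterComm i (C.e*Θ a*C.e - C.e*lam*C.e*a - C.e*w*C.e) a) * m) K]
      rw [Finset.sum_range_succ' (fun i => (-a)^(K-i)
        * (iterComm i (C.e*Θ a*C.e) a * m)) K] at hODD
      have middle : ∀ i ∈ Finset.range K,
          ((-a)^(K-(i+1)) * iterComm (i+1) (C.e*Θ a*C.e - C.e*lam*C.e*a - C.e*w*C.e) a) * m
          = (-a)^(K-(i+1)) * (iterComm (i+1) (C.e*Θ a*C.e) a * m) := by
        intro i _
        rw [hδstep i, mul_assoc]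
      rw [Finset.sum_congr rfl middle]
      have hWm : (C.e*w*C.e)*m = m * (C.f*Θ a*C.f) := by
        rw [hw]; exact cen_moveL (C := C) hwc hm
      have edge : ((-a)^(K-0) * iterComm 0 (C.e*Θ a*C.e - C.e*lam*C.e*a - C.e*w*C.e) a) * m
          = (-a)^K * (iterComm 0 (C.e*Θ a*C.e) a * m)
            - (-a)^K * (m * (C.f*Θ a*C.f)) + (-a)^(K+1) * ((C.e*lam*C.e) * m) := by
        rw [Nat.sub_zero, iterComm_zero, iterComm_zero]
        calc ((-a)^K * (C.e*Θ a*C.e - C.e*lam*C.e*a - C.e*w*C.e)) * m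
            = (-a)^K * ((C.e*Θ a*C.e) * m) - (-a)^K * ((C.e*w*C.e)*m)
              - (-a)^K * ((C.e*lam*C.e*a)*m) := by noncomm_ring
          _ = (-a)^K * ((C.e*Θ a*C.e) * m) - (-a)^K * (m * (C.f*Θ a*C.f))
              + (-a)^(K+1) * ((C.e*lam*C.e) * m) := by
              rw [hWm, hLa, pow_succ]; noncomm_ring
      rw [edge]
      have final : (∑ i ∈ Finset.range K, (-a)^(K-(i+1)) * (iterComm (i+1) (C.e*Θ a*C.e) a * m))
          + ((-a)^K * (iterComm 0 (C.e*Θ a*C.e) a * m)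
            - (-a)^K * (m * (C.f*Θ a*C.f)) + (-a)^(K+1) * ((C.e*lam*C.e) * m))
          = ((∑ i ∈ Finset.range K, (-a)^(K-(i+1)) * (iterComm (i+1) (C.e*Θ a*C.e) a * m))
              + (-a)^(K-0) * (iterComm 0 (C.e*Θ a*C.e) a * m))
            - (-a)^K * (m * (C.f*Θ a*C.f)) + (-a)^(K+1) * ((C.e*lam*C.e) * m) := by
        rw [Nat.sub_zero]; abel
      rw [final, hODD]
  -- ## killing δ_A : P a = (e lam e) a + (e w e)
  have deltaA : ∀ a w : T, C.IsA a → (∀ x, w*x = x*w) → C.f*Θ a*C.f = C.f*w*C.f →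
      C.e*Θ a*C.e - C.e*lam*C.e*a - C.e*w*C.e = 0 := by
    intro a w ha hwc hw
    have hLa : (C.e*lam*C.e)*a = a*(C.e*lam*C.e) := cen_cornerA (C := C) hlamc ha
    have hWa : (C.e*w*C.e)*a = a*(C.e*w*C.e) := cen_cornerA (C := C) hwc ha
    have hIsδ : C.IsA (C.e*Θ a*C.e - C.e*lam*C.e*a - C.e*w*C.e) :=
      (isA_ee.sub (isA_ee.mulA ha)).sub isA_ee
    have hδstep : ∀ i : ℕ,
        iterComm (i+1) (C.e*Θ a*C.e - C.e*lam*C.e*a - C.e*w*C.e) a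
          = iterComm (i+1) (C.e*Θ a*C.e) a := by
      intro i
      have hcomm1 : (C.e*lam*C.e*a) * a = a * (C.e*lam*C.e*a) := by
        rw [← mul_assoc, ← hLa]
      rw [iterComm_sub_left, iterComm_sub_left, iterComm_of_comm hcomm1 i,
        iterComm_of_comm hWa i, sub_zero, sub_zero]
    have J0 := GA a w ha hwc hw
    -- the shifted instance at a + e
    have hwc' : ∀ x : T, (w + we)*x = x*(w + we) := by
      intro x; rw [add_mul, mul_add, hwc x, hwec x]
    have hw' : C.f*Θ (a+C.e)*C.f = C.f*(w+we)*C.f := by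
      have h1 : C.f*Θ (a+C.e)*C.f = C.f*Θ a*C.f + C.f*Θ C.e*C.f := by
        rw [map_add]; noncomm_ring
      rw [h1, hw, hwe]; noncomm_ring
    have J1' := GA (a+C.e) (w+we) (ha.add isA_e) hwc' hw'
    have hδeq : C.e*Θ (a+C.e)*C.e - C.e*lam*C.e*(a+C.e) - C.e*(w+we)*C.e
        = C.e*Θ a*C.e - C.e*lam*C.e*a - C.e*w*C.e := by
      have h1 : C.e*Θ (a+C.e)*C.e - C.e*lam*C.e*(a+C.e) - C.e*(w+we)*C.e
          = (C.e*Θ a*C.e - C.e*lam*C.e*a - C.e*w*C.e)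
            + (C.e*Θ C.e*C.e - C.e*lam*C.e - C.e*we*C.e) := by
        rw [map_add, mul_add (C.e*lam*C.e) a C.e, (isA_ee (C := C) (x := lam)).2]
        noncomm_ring
      have h2 : C.e*Θ C.e*C.e - C.e*lam*C.e - C.e*we*C.e = 0 := by
        rw [hlamA]; abel
      rw [h1, h2, add_zero]
    have J1 : ∑ i ∈ Finset.range (K+1), (-(a+C.e))^(K-i)
        * iterComm i (C.e*Θ a*C.e - C.e*lam*C.e*a - C.e*w*C.e) a = 0 := by
      rw [← J1']
      apply Finset.sum_congr rfl
      intro i _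
      rw [hδeq, dropE (C := C) hIsδ ha i]
    -- commutation facts for the coefficients
    have hca : (-a) * a = a * (-a) := by rw [neg_mul, mul_neg]
    have hca' : (-(a+C.e)) * a = a * (-(a+C.e)) := by
      have h : (a+C.e)*a = a*(a+C.e) := by rw [add_mul, mul_add, ha.1, ha.2]
      rw [neg_mul, mul_neg, h]
    -- pumped families
    have fam0 : ∀ r, ∑ i ∈ Finset.range (K+1), (-a)^(K-i)
        * iterComm (i+r) (C.e*Θ a*C.e - C.e*lam*C.e*a - C.e*w*C.e) a = 0 := by
      intro r; induction r with
      | zero => simpa using J0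
      | succ r ih => exact pump_left a (-a) _ hca K r ih
    have fam1 : ∀ r, ∑ i ∈ Finset.range (K+1), (-(a+C.e))^(K-i)
        * iterComm (i+r) (C.e*Θ a*C.e - C.e*lam*C.e*a - C.e*w*C.e) a = 0 := by
      intro r; induction r with
      | zero => simpa using J1
      | succ r ih => exact pump_left a (-(a+C.e)) _ hca' K r ih
    -- vanishing above level k
    have Dtop : ∀ s, iterComm (k+s) (C.e*Θ a*C.e - C.e*lam*C.e*a - C.e*w*C.e) a = 0 := by
      intro s; induction s with
      | zero =>
        have h1 : iterComm (K+1) (C.e*Θ a*C.e - C.e*lam*C.e*a - C.e*w*C.e) a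
            = iterComm (K+1) (C.e*Θ a*C.e) a := hδstep K
        have h2 := hPA a ha
        rw [hkK] at h2
        rw [Nat.add_zero, hkK, h1, h2]
      | succ s ih =>
        have h : k + (s+1) = (k+s)+1 := by omega
        rw [h, iterComm_succ, ih, zero_mul, mul_zero, sub_zero]
    -- downward induction
    have down : ∀ j, j ≤ K+1 → ∀ l, (K+1) - j ≤ l →
        iterComm l (C.e*Θ a*C.e - C.e*lam*C.e*a - C.e*w*C.e) a = 0 := by
      intro j
      induction j with
      | zero =>
        intro _ l hl
        have h := Dtop (l - (K+1))
        rw [show k + (l - (K+1)) = l by omega] at h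
        exact h
      | succ j ihj =>
        intro hj l hl
        by_cases hcase : (K+1) - j ≤ l
        · exact ihj (by omega) l hcase
        · have peel : ∀ c : T, (∀ r, ∑ i ∈ Finset.range (K+1), c^(K-i)
              * iterComm (i+r) (C.e*Θ a*C.e - C.e*lam*C.e*a - C.e*w*C.e) a = 0) →
              c^K * iterComm l (C.e*Θ a*C.e - C.e*lam*C.e*a - C.e*w*C.e) a = 0 := by
            intro c hfam
            have h := hfam l
            rw [Finset.sum_range_succ' (fun i => c^(K-i)
              * iterComm (i+l) (C.e*Θ a*C.e - C.e*lam*C.e*a - C.e*w*C.e) a) K] at h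
            have hz : ∀ i ∈ Finset.range K, c^(K-(i+1))
                * iterComm ((i+1)+l) (C.e*Θ a*C.e - C.e*lam*C.e*a - C.e*w*C.e) a = 0 := by
              intro i _
              rw [ihj (by omega) ((i+1)+l) (by omega), mul_zero]
            rw [Finset.sum_eq_zero hz, zero_add, Nat.sub_zero] at h
            simpa using h
          have h0 := peel (-a) fam0
          have h1 := peel (-(a+C.e)) fam1
          have hXp : (a+C.e)^K * iterComm l (C.e*Θ a*C.e - C.e*lam*C.e*a - C.e*w*C.e) a = 0 :=
            neg_pow_cancel_left _ _ _ h1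
          have hδl : C.IsA (iterComm l (C.e*Θ a*C.e - C.e*lam*C.e*a - C.e*w*C.e) a) :=
            isA_iterComm hIsδ ha l
          refine bezout_left (a+C.e) (-a) _ K ?_ hXp h0 ?_
          · have h : (a+C.e)*a = a*(a+C.e) := by rw [add_mul, mul_add, ha.1, ha.2]
            rw [mul_neg, neg_mul, h]
          · have h : a + C.e + -a = C.e := by abel
            rw [h]; exact hδl.1
    have h := down (K+1) le_rfl 0 (by omega)
    simpa using h
  -- ## B-side odd identity
  have ODDB : ∀ b m : T, C.IsB b → C.IsM m →
      ((C.e*Θ b*C.e) * m)*b^K + (C.e*Θ m*C.f)*b^(K+1)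
        - (∑ i ∈ Finset.range (K+1), (m * iterComm i (C.f*Θ b*C.f) b)*b^(K-i)) = 0 := by
    intro b m hb hm
    have E1 := (KEY 0 m b isA_zero hm hb).2.1
    rw [map_zero] at E1
    simp only [mul_zero, zero_mul, zero_add] at E1
    have E2 := (KEY 0 (-m) b isA_zero hm.neg hb).2.1
    rw [map_neg, map_zero] at E2
    simp only [mul_zero, zero_mul, zero_add, mul_neg, neg_mul] at E2
    rw [hkK] at E1 E2
    rw [mseq_closed_right] at E1 E2
    have step : ∀ i ∈ Finset.range (K+1),
        (m * iterComm i (C.f*Θ m*C.f + C.f*Θ b*C.f) b)*b^(K-i)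
          - ((-m) * iterComm i (-(C.f*Θ m*C.f) + C.f*Θ b*C.f) b)*b^(K-i)
        = (m * iterComm i (C.f*Θ b*C.f) b)*b^(K-i)
          + (m * iterComm i (C.f*Θ b*C.f) b)*b^(K-i) := by
      intro i _
      rw [iterComm_add_left, iterComm_add_left, iterComm_neg_left]
      noncomm_ring
    have key : (((C.e*Θ b*C.e) * m)*b^K + (C.e*Θ m*C.f)*b^(K+1)
        - (∑ i ∈ Finset.range (K+1), (m * iterComm i (C.f*Θ b*C.f) b)*b^(K-i)))
        + (((C.e*Θ b*C.e) * m)*b^K + (C.e*Θ m*C.f)*b^(K+1)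
        - (∑ i ∈ Finset.range (K+1), (m * iterComm i (C.f*Θ b*C.f) b)*b^(K-i))) = 0 := by
      have h2 : ((C.e*Θ m*C.e + C.e*Θ b*C.e) * m)*b^K
            - ((-(C.e*Θ m*C.e) + C.e*Θ b*C.e) * (-m))*b^K
          = ((C.e*Θ b*C.e) * m)*b^K + ((C.e*Θ b*C.e) * m)*b^K := by noncomm_ring
      have h3 : (C.e*Θ m*C.f + C.e*Θ b*C.f)*b^(K+1)
            - (-(C.e*Θ m*C.f) + C.e*Θ b*C.f)*b^(K+1)
          = (C.e*Θ m*C.f)*b^(K+1) + (C.e*Θ m*C.f)*b^(K+1) := by noncomm_ring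
      calc (((C.e*Θ b*C.e) * m)*b^K + (C.e*Θ m*C.f)*b^(K+1)
            - (∑ i ∈ Finset.range (K+1), (m * iterComm i (C.f*Θ b*C.f) b)*b^(K-i)))
          + (((C.e*Θ b*C.e) * m)*b^K + (C.e*Θ m*C.f)*b^(K+1)
            - (∑ i ∈ Finset.range (K+1), (m * iterComm i (C.f*Θ b*C.f) b)*b^(K-i)))
          = (((C.e*Θ b*C.e) * m)*b^K + ((C.e*Θ b*C.e) * m)*b^K)
            + ((C.e*Θ m*C.f)*b^(K+1) + (C.e*Θ m*C.f)*b^(K+1))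
            - ((∑ i ∈ Finset.range (K+1), (m * iterComm i (C.f*Θ b*C.f) b)*b^(K-i))
              + (∑ i ∈ Finset.range (K+1), (m * iterComm i (C.f*Θ b*C.f) b)*b^(K-i))) := by
            abel
        _ = (((C.e*Θ m*C.e + C.e*Θ b*C.e) * m)*b^K - ((-(C.e*Θ m*C.e) + C.e*Θ b*C.e) * (-m))*b^K)
            + ((C.e*Θ m*C.f + C.e*Θ b*C.f)*b^(K+1) - (-(C.e*Θ m*C.f) + C.e*Θ b*C.f)*b^(K+1))
            - (∑ i ∈ Finset.range (K+1),
                ((m * iterComm i (C.f*Θ m*C.f + C.f*Θ b*C.f) b)*b^(K-i)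
                  - ((-m) * iterComm i (-(C.f*Θ m*C.f) + C.f*Θ b*C.f) b)*b^(K-i))) := by
            rw [Finset.sum_congr rfl step, Finset.sum_add_distrib, h2, h3]
        _ = (((C.e*Θ m*C.e + C.e*Θ b*C.e) * m)*b^K + (C.e*Θ m*C.f + C.e*Θ b*C.f)*b^(K+1)
              - (∑ i ∈ Finset.range (K+1),
                  (m * iterComm i (C.f*Θ m*C.f + C.f*Θ b*C.f) b)*b^(K-i)))
            - ((((-(C.e*Θ m*C.e) + C.e*Θ b*C.e)) * (-m))*b^K
              + ((-(C.e*Θ m*C.f)) + C.e*Θ b*C.f)*b^(K+1)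
              - (∑ i ∈ Finset.range (K+1),
                  ((-m) * iterComm i (-(C.f*Θ m*C.f) + C.f*Θ b*C.f) b)*b^(K-i))) := by
            rw [Finset.sum_sub_distrib]; abel
        _ = 0 := by rw [E1, E2]; exact sub_zero 0
    exact htf _ key
  -- ## the master B-side identity (GB)
  have GB : ∀ b z : T, C.IsB b → (∀ x, z*x = x*z) → C.e*Θ b*C.e = C.e*z*C.e →
      ∑ i ∈ Finset.range (K+1),
        iterComm i (C.f*Θ b*C.f - C.f*lam*C.f*b - C.f*z*C.f) b * b^(K-i) = 0 := by
    intro b z hb hzc hz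
    have hLb : (C.f*lam*C.f)*b = b*(C.f*lam*C.f) := cen_cornerB (C := C) hlamc hb
    have hZb : (C.f*z*C.f)*b = b*(C.f*z*C.f) := cen_cornerB (C := C) hzc hb
    have hIsδ : C.IsB (C.f*Θ b*C.f - C.f*lam*C.f*b - C.f*z*C.f) :=
      (isB_ff.sub (isB_ff.mulB hb)).sub isB_ff
    have hδstep : ∀ i : ℕ,
        iterComm (i+1) (C.f*Θ b*C.f - C.f*lam*C.f*b - C.f*z*C.f) b
          = iterComm (i+1) (C.f*Θ b*C.f) b := by
      intro i
      have hcomm1 : (C.f*lam*C.f*b) * b = b * (C.f*lam*C.f*b) := by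
        rw [← mul_assoc, ← hLb]
      rw [iterComm_sub_left, iterComm_sub_left, iterComm_of_comm hcomm1 i,
        iterComm_of_comm hZb i, sub_zero, sub_zero]
    apply C.faithR
    · apply isB_iff.mp
      apply isB_sum
      intro i _
      exact isB_mul_pow (C := C) (isB_iterComm hIsδ hb i) hb (K-i)
    · intro m hmraw
      have hm : C.IsM m := isM_iff.mpr hmraw
      have hODD := ODDB b m hb hm
      rw [hQlam m hm] at hODD
      rw [Finset.mul_sum]
      rw [Finset.sum_range_succ' (fun i => m * (iterComm i
        (C.f*Θ b*C.f - C.f*lam*C.f*b - C.f*z*C.f) b * b^(K-i))) K]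
      rw [Finset.sum_range_succ' (fun i =>
        (m * iterComm i (C.f*Θ b*C.f) b)*b^(K-i)) K] at hODD
      have middle : ∀ i ∈ Finset.range K,
          m * (iterComm (i+1) (C.f*Θ b*C.f - C.f*lam*C.f*b - C.f*z*C.f) b * b^(K-(i+1)))
          = (m * iterComm (i+1) (C.f*Θ b*C.f) b)*b^(K-(i+1)) := by
        intro i _
        rw [hδstep i, ← mul_assoc]
      rw [Finset.sum_congr rfl middle]
      have hZm : m*(C.f*z*C.f) = (C.e*Θ b*C.e)*m := by
        rw [hz]; exact (cen_moveL (C := C) hzc hm).symm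
      have hLm : (C.e*lam*C.e)*m = m*(C.f*lam*C.f) := cen_moveL (C := C) hlamc hm
      have edge : m * (iterComm 0 (C.f*Θ b*C.f - C.f*lam*C.f*b - C.f*z*C.f) b * b^(K-0))
          = (m * iterComm 0 (C.f*Θ b*C.f) b)*b^(K-0)
            - ((C.e*Θ b*C.e)*m)*b^K - ((C.e*lam*C.e)*m)*b^(K+1) := by
        rw [Nat.sub_zero, iterComm_zero, iterComm_zero]
        calc m * ((C.f*Θ b*C.f - C.f*lam*C.f*b - C.f*z*C.f) * b^K)
            = (m * (C.f*Θ b*C.f))*b^K - (m*(C.f*z*C.f))*b^K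
              - ((m*(C.f*lam*C.f))*b)*b^K := by noncomm_ring
          _ = (m * (C.f*Θ b*C.f))*b^K - ((C.e*Θ b*C.e)*m)*b^K
              - ((C.e*lam*C.e)*m)*b^(K+1) := by
              rw [hZm, hLm, pow_succ']; noncomm_ring
      rw [edge]
      have final : (∑ i ∈ Finset.range K, (m * iterComm (i+1) (C.f*Θ b*C.f) b)*b^(K-(i+1)))
          + ((m * iterComm 0 (C.f*Θ b*C.f) b)*b^(K-0)
            - ((C.e*Θ b*C.e)*m)*b^K - ((C.e*lam*C.e)*m)*b^(K+1))
          = -(((C.e*Θ b*C.e)*m)*b^K + ((C.e*lam*C.e)*m)*b^(K+1)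
            - ((∑ i ∈ Finset.range K, (m * iterComm (i+1) (C.f*Θ b*C.f) b)*b^(K-(i+1)))
              + (m * iterComm 0 (C.f*Θ b*C.f) b)*b^(K-0))) := by abel
      rw [final, hODD, neg_zero]
  -- ## anchor: the f-instance of δ_B vanishes
  have hSf0 : C.f*Θ C.f*C.f - C.f*lam*C.f - C.f*zf*C.f = 0 := by
    apply C.faithR
    · exact isB_iff.mp ((isB_ff.sub isB_ff).sub isB_ff)
    · intro m hmraw
      have hm : C.IsM m := isM_iff.mpr hmraw
      have h1 := hQm m hm
      have h2 := hQm2 m hm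
      -- m * (f Θf f) = e Θm f + (e Θf e) m
      have h3 : m*(C.f*Θ C.f*C.f) = C.e*Θ m*C.f + C.e*Θ C.f*C.e*m :=
        (sub_eq_iff_eq_add.mp h2.symm)
      have h4 : m*(C.f*lam*C.f) = C.e*Θ C.e*C.e*m - m*(C.f*Θ C.e*C.f) := by
        rw [← cen_moveL (C := C) hlamc hm, hlamA, sub_mul]
        congr 1
        rw [hwe]
        exact cen_moveL (C := C) hwec hm
      have h5 : m*(C.f*zf*C.f) = C.e*Θ C.f*C.e*m := by
        rw [← cen_moveL (C := C) hzfc hm, ← hzf]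
      have expand : m * (C.f*Θ C.f*C.f - C.f*lam*C.f - C.f*zf*C.f)
          = m*(C.f*Θ C.f*C.f) - m*(C.f*lam*C.f) - m*(C.f*zf*C.f) := by noncomm_ring
      rw [expand, h3, h4, h5, h1]
      abel
  -- ## killing δ_B : S b = (f lam f) b + (f z f)
  have deltaB : ∀ b z : T, C.IsB b → (∀ x, z*x = x*z) → C.e*Θ b*C.e = C.e*z*C.e →
      C.f*Θ b*C.f - C.f*lam*C.f*b - C.f*z*C.f = 0 := by
    intro b z hb hzc hz
    have hLb : (C.f*lam*C.f)*b = b*(C.f*lam*C.f) := cen_cornerB (C := C) hlamc hb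
    have hZb : (C.f*z*C.f)*b = b*(C.f*z*C.f) := cen_cornerB (C := C) hzc hb
    have hIsδ : C.IsB (C.f*Θ b*C.f - C.f*lam*C.f*b - C.f*z*C.f) :=
      (isB_ff.sub (isB_ff.mulB hb)).sub isB_ff
    have hδstep : ∀ i : ℕ,
        iterComm (i+1) (C.f*Θ b*C.f - C.f*lam*C.f*b - C.f*z*C.f) b
          = iterComm (i+1) (C.f*Θ b*C.f) b := by
      intro i
      have hcomm1 : (C.f*lam*C.f*b) * b = b * (C.f*lam*C.f*b) := by
        rw [← mul_assoc, ← hLb]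
      rw [iterComm_sub_left, iterComm_sub_left, iterComm_of_comm hcomm1 i,
        iterComm_of_comm hZb i, sub_zero, sub_zero]
    have J0 := GB b z hb hzc hz
    have hzc' : ∀ x : T, (z + zf)*x = x*(z + zf) := by
      intro x; rw [add_mul, mul_add, hzc x, hzfc x]
    have hz' : C.e*Θ (b+C.f)*C.e = C.e*(z+zf)*C.e := by
      have h1 : C.e*Θ (b+C.f)*C.e = C.e*Θ b*C.e + C.e*Θ C.f*C.e := by
        rw [map_add]; noncomm_ring
      rw [h1, hz, hzf]; noncomm_ring
    have J1' := GB (b+C.f) (z+zf) (hb.add isB_f) hzc' hz'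
    have hδeq : C.f*Θ (b+C.f)*C.f - C.f*lam*C.f*(b+C.f) - C.f*(z+zf)*C.f
        = C.f*Θ b*C.f - C.f*lam*C.f*b - C.f*z*C.f := by
      have h1 : C.f*Θ (b+C.f)*C.f - C.f*lam*C.f*(b+C.f) - C.f*(z+zf)*C.f
          = (C.f*Θ b*C.f - C.f*lam*C.f*b - C.f*z*C.f)
            + (C.f*Θ C.f*C.f - C.f*lam*C.f - C.f*zf*C.f) := by
        rw [map_add, mul_add (C.f*lam*C.f) b C.f, (isB_ff (C := C) (x := lam)).2]
        noncomm_ring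
      rw [h1, hSf0, add_zero]
    have J1 : ∑ i ∈ Finset.range (K+1),
        iterComm i (C.f*Θ b*C.f - C.f*lam*C.f*b - C.f*z*C.f) b * (b+C.f)^(K-i) = 0 := by
      rw [← J1']
      apply Finset.sum_congr rfl
      intro i _
      rw [hδeq, dropF (C := C) hIsδ hb i]
    have hcb : b * b = b * b := rfl
    have hcb' : (b+C.f) * b = b * (b+C.f) := by rw [add_mul, mul_add, hb.1, hb.2]
    have fam0 : ∀ r, ∑ i ∈ Finset.range (K+1),
        iterComm (i+r) (C.f*Θ b*C.f - C.f*lam*C.f*b - C.f*z*C.f) b * b^(K-i) = 0 := by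
      intro r; induction r with
      | zero => simpa using J0
      | succ r ih => exact pump_right b b _ hcb K r ih
    have fam1 : ∀ r, ∑ i ∈ Finset.range (K+1),
        iterComm (i+r) (C.f*Θ b*C.f - C.f*lam*C.f*b - C.f*z*C.f) b * (b+C.f)^(K-i) = 0 := by
      intro r; induction r with
      | zero => simpa using J1
      | succ r ih => exact pump_right b (b+C.f) _ hcb' K r ih
    have Dtop : ∀ s, iterComm (k+s) (C.f*Θ b*C.f - C.f*lam*C.f*b - C.f*z*C.f) b = 0 := by
      intro s; induction s with
      | zero =>
        have h1 : iterComm (K+1) (C.f*Θ b*C.f - C.f*lam*C.f*b - C.f*z*C.f) b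
            = iterComm (K+1) (C.f*Θ b*C.f) b := hδstep K
        have h2 := hSB b hb
        rw [hkK] at h2
        rw [Nat.add_zero, hkK, h1, h2]
      | succ s ih =>
        have h : k + (s+1) = (k+s)+1 := by omega
        rw [h, iterComm_succ, ih, zero_mul, mul_zero, sub_zero]
    have down : ∀ j, j ≤ K+1 → ∀ l, (K+1) - j ≤ l →
        iterComm l (C.f*Θ b*C.f - C.f*lam*C.f*b - C.f*z*C.f) b = 0 := by
      intro j
      induction j with
      | zero =>
        intro _ l hl
        have h := Dtop (l - (K+1))
        rw [show k + (l - (K+1)) = l by omega] at h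
        exact h
      | succ j ihj =>
        intro hj l hl
        by_cases hcase : (K+1) - j ≤ l
        · exact ihj (by omega) l hcase
        · have peel : ∀ c : T, (∀ r, ∑ i ∈ Finset.range (K+1),
              iterComm (i+r) (C.f*Θ b*C.f - C.f*lam*C.f*b - C.f*z*C.f) b * c^(K-i) = 0) →
              iterComm l (C.f*Θ b*C.f - C.f*lam*C.f*b - C.f*z*C.f) b * c^K = 0 := by
            intro c hfam
            have h := hfam l
            rw [Finset.sum_range_succ' (fun i =>
              iterComm (i+l) (C.f*Θ b*C.f - C.f*lam*C.f*b - C.f*z*C.f) b * c^(K-i)) K] at h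
            have hz2 : ∀ i ∈ Finset.range K,
                iterComm ((i+1)+l) (C.f*Θ b*C.f - C.f*lam*C.f*b - C.f*z*C.f) b * c^(K-(i+1))
                  = 0 := by
              intro i _
              rw [ihj (by omega) ((i+1)+l) (by omega), zero_mul]
            rw [Finset.sum_eq_zero hz2, zero_add, Nat.sub_zero] at h
            simpa using h
          have h0 := peel b fam0
          have h1 := peel (b+C.f) fam1
          have hδl : C.IsB (iterComm l (C.f*Θ b*C.f - C.f*lam*C.f*b - C.f*z*C.f) b) :=
            isB_iterComm hIsδ hb l
          have hYp : iterComm l (C.f*Θ b*C.f - C.f*lam*C.f*b - C.f*z*C.f) b * (-b)^K = 0 := by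
            rcases Nat.even_or_odd K with hpar | hpar
            · rw [hpar.neg_pow]; exact h0
            · rw [hpar.neg_pow, mul_neg, h0, neg_zero]
          refine bezout_right (b+C.f) (-b) _ K ?_ h1 hYp ?_
          · have h : (b+C.f)*b = b*(b+C.f) := hcb'
            rw [mul_neg, neg_mul, h]
          · have h : b + C.f + -b = C.f := by abel
            rw [h]; exact hδl.2
    have h := down (K+1) le_rfl 0 (by omega)
    simpa using h
  -- ## centrality of ζ on A
  have centA : ∀ a : T, C.IsA a → ∀ x : T, (Θ a - lam*a)*x = x*(Θ a - lam*a) := by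
    intro a ha
    obtain ⟨w, hwc, hw⟩ := mkB (C.f*Θ a*C.f) isB_ff (fun y hy => hSaK a y ha hy)
    have hδ := deltaA a w ha hwc hw
    have hlam_split := cen_split (C := C) hlamc
    have hla : lam * a = C.e*lam*C.e*a := by
      conv_lhs => rw [hlam_split]
      rw [add_mul, (isB_ff (C := C) (x := lam)).mulA_zero ha, add_zero]
    have hζ : Θ a - lam*a = w := by
      have hp := peirce (C := C) (Θ a)
      rw [hQa0 a ha, add_zero] at hp
      have hPa : C.e*Θ a*C.e = C.e*lam*C.e*a + C.e*w*C.e := by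
        rw [sub_sub] at hδ
        exact sub_eq_zero.mp hδ
      have hwsplit := cen_split (C := C) hwc
      rw [hp, hPa, hw, hla]
      calc C.e*lam*C.e*a + C.e*w*C.e + C.f*w*C.f - C.e*lam*C.e*a
          = C.e*w*C.e + C.f*w*C.f := by abel
        _ = w := hwsplit.symm
    intro x; rw [hζ]; exact hwc x
  -- ## centrality of ζ on B
  have centB : ∀ b : T, C.IsB b → ∀ x : T, (Θ b - lam*b)*x = x*(Θ b - lam*b) := by
    intro b hb
    obtain ⟨z, hzc, hz⟩ := mkA (C.e*Θ b*C.e) isA_ee (fun x hx => hPbK b x hb hx)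
    have hδ := deltaB b z hb hzc hz
    have hlam_split := cen_split (C := C) hlamc
    have hlb : lam * b = C.f*lam*C.f*b := by
      conv_lhs => rw [hlam_split]
      rw [add_mul, (isA_ee (C := C) (x := lam)).mulB_zero hb, zero_add]
    have hζ : Θ b - lam*b = z := by
      have hp := peirce (C := C) (Θ b)
      rw [hQb0 b hb, add_zero] at hp
      have hSb : C.f*Θ b*C.f = C.f*lam*C.f*b + C.f*z*C.f := by
        rw [sub_sub] at hδ
        exact sub_eq_zero.mp hδ
      have hzsplit := cen_split (C := C) hzc
      rw [hp, hSb, hz, hlb]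
      calc C.e*z*C.e + (C.f*lam*C.f*b + C.f*z*C.f) - C.f*lam*C.f*b
          = C.e*z*C.e + C.f*z*C.f := by abel
        _ = z := hzsplit.symm
    intro x; rw [hζ]; exact hzc x
  -- ## the m0 anchor for the M-part
  obtain ⟨z0, hz0c, hz0⟩ := mkA (C.e*Θ m0*C.e) isA_ee (fun x hx => hPmK m0 x hm0 hx)
  obtain ⟨y0, hy0c, hy0⟩ := mkB (C.f*Θ m0*C.f) isB_ff (fun y hy => hSmK m0 y hm0 hy)
  have hsumc : ∀ x : T, (C.e*Θ m0*C.e + C.f*Θ m0*C.f) * x = x * (C.e*Θ m0*C.e + C.f*Θ m0*C.f) := by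
    apply (hZTiff _).mpr
    refine ⟨C.e*Θ m0*C.e, C.f*Θ m0*C.f, ⟨isA_iff.mp isA_ee, ?_⟩, ⟨isB_iff.mp isB_ff, ?_⟩,
      hI2 m0 hm0, rfl⟩
    · intro x hx; rw [hz0]; exact cen_cornerA (C := C) hz0c (isA_iff.mpr hx)
    · intro y hy; rw [hy0]; exact cen_cornerB (C := C) hy0c (isB_iff.mpr hy)
  have hz0eq : z0 = C.e*Θ m0*C.e + C.f*Θ m0*C.f := by
    apply cen_eqA (C := C) hz0c hsumc
    rw [← hz0]
    have h1 : C.e*(C.e*Θ m0*C.e + C.f*Θ m0*C.f)*C.e = C.e*Θ m0*C.e + 0 := by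
      rw [mul_add, add_mul]
      congr 1
      · rw [(isA_ee (C := C) (x := Θ m0)).1, (isA_ee (C := C) (x := Θ m0)).2]
      · rw [(isB_ff (C := C) (x := Θ m0)).eb, zero_mul]
    rw [h1, add_zero]
  have hfz0 : C.f*z0*C.f = C.f*Θ m0*C.f := by
    rw [hz0eq, mul_add, add_mul]
    rw [(isA_ee (C := C) (x := Θ m0)).fa, zero_mul,
      (isB_ff (C := C) (x := Θ m0)).1, (isB_ff (C := C) (x := Θ m0)).2, zero_add]
  -- ## centrality of ζ on M
  have centM : ∀ m : T, C.IsM m → ∀ x : T, (Θ m - lam*m)*x = x*(Θ m - lam*m) := by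
    intro m hm
    obtain ⟨zm, hzmc, hzm⟩ := mkA (C.e*Θ m*C.e) isA_ee (fun x hx => hPmK m x hm hx)
    obtain ⟨ym, hymc, hym⟩ := mkB (C.f*Θ m*C.f) isB_ff (fun y hy => hSmK m y hm hy)
    have pol := hI2p m m0 hm hm0
    have p1 : C.e*Θ m*C.e*m0 = m0*(C.f*zm*C.f) := by
      rw [hzm]; exact cen_moveL (C := C) hzmc hm0
    have p2 : C.e*Θ m0*C.e*m = m*(C.f*Θ m0*C.f) := by
      rw [hz0, ← hfz0]; exact cen_moveL (C := C) hz0c hm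
    rw [p1, p2] at pol
    have pol' : m0*(C.f*zm*C.f) = m0*(C.f*Θ m*C.f) := by
      have h := pol
      rw [add_comm (m*(C.f*Θ m0*C.f))] at h
      exact add_right_cancel h
    have link : (C.e*Θ m*C.e)*m0 = m0*(C.f*Θ m*C.f) := by
      rw [hzm, cen_moveL (C := C) hzmc hm0]
      exact pol'
    have hζm : Θ m - lam*m = C.e*Θ m*C.e + C.f*Θ m*C.f := by
      have hp := peirce (C := C) (Θ m)
      have hlm : lam * m = C.e*Θ m*C.f := by
        conv_lhs => rw [cen_split (C := C) hlamc]
        rw [add_mul, (isB_ff (C := C) (x := lam)).mulM_zero hm, add_zero, ← hQlam m hm]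
      calc Θ m - lam*m
          = (C.e*Θ m*C.e + C.e*Θ m*C.f + C.f*Θ m*C.f) - C.e*Θ m*C.f := by
            rw [← hp, ← hlm]
        _ = C.e*Θ m*C.e + C.f*Θ m*C.f := by abel
    have hcen : ∀ x : T, (C.e*Θ m*C.e + C.f*Θ m*C.f) * x = x * (C.e*Θ m*C.e + C.f*Θ m*C.f) := by
      apply (hZTiff _).mpr
      refine ⟨C.e*Θ m*C.e, C.f*Θ m*C.f, ⟨isA_iff.mp isA_ee, ?_⟩, ⟨isB_iff.mp isB_ff, ?_⟩,
        link, rfl⟩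
      · intro x hx; rw [hzm]; exact cen_cornerA (C := C) hzmc (isA_iff.mpr hx)
      · intro y hy; rw [hym]; exact cen_cornerB (C := C) hymc (isB_iff.mpr hy)
    intro x; rw [hζm]; exact hcen x
  -- ## conclusion
  refine ⟨lam, hlamc, Θ - LinearMap.mulLeft R lam, ?_, ?_⟩
  · intro t x
    have ht : (Θ - LinearMap.mulLeft R lam) t = Θ t - lam * t := by
      simp [LinearMap.sub_apply, LinearMap.mulLeft_apply]
    rw [ht]
    have hdec := peirce (C := C) t
    have hsplit : Θ t - lam*t = (Θ (C.e*t*C.e) - lam*(C.e*t*C.e))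
        + (Θ (C.e*t*C.f) - lam*(C.e*t*C.f)) + (Θ (C.f*t*C.f) - lam*(C.f*t*C.f)) := by
      conv_lhs => rw [hdec]
      rw [map_add, map_add]
      noncomm_ring
    rw [hsplit]
    have h1 := centA (C.e*t*C.e) isA_ee x
    have h2 := centM (C.e*t*C.f) isM_ef x
    have h3 := centB (C.f*t*C.f) isB_ff x
    rw [add_mul, add_mul, mul_add, mul_add, h1, h2, h3]
  · intro t
    have ht : (Θ - LinearMap.mulLeft R lam) t = Θ t - lam * t := by
      simp [LinearMap.sub_apply, LinearMap.mulLeft_apply]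
    rw [ht]
    abel

end Main

/-- Du–Wang: let `T` be a 2-torsion free triangular algebra with Peirce
corners `A = eTe`, `B = fTf`, `M = eTf` (and `fTe = 0`). Under conditions (1)-(3), every
k-commuting `R`-linear map of `T` is proper. -/
theorem kCommuting_proper_triangular
    {R : Type*} [CommRing R] {T : Type*} [Ring T] [Algebra R T]
    (e : T) (he : e * e = e) (f : T) (hf : f = 1 - e)
    (htri : ∀ g : T, f * g * e = 0)
    (hM : ∃ m : T, m = e * m * f ∧ m ≠ 0)
    (hMfaithL : ∀ a : T, a = e * a * e → (∀ m : T, m = e * m * f → a * m = 0) → a = 0)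
    (hMfaithR : ∀ b : T, b = f * b * f → (∀ m : T, m = e * m * f → m * b = 0) → b = 0)
    (htf : ∀ t : T, t + t = 0 → t = 0)
    (k : ℕ) (hk : 2 ≤ k)
    -- (1): Z(A)_k = π_A(Z(T))
    (hZAk : ∀ c : T,
      (c = e * c * e ∧ ∀ x : T, x = e * x * e → iterComm k c x = 0) ↔
      (∃ z : T, (∀ x : T, z * x = x * z) ∧ c = e * z * e))
    -- (2): Z(B)_k = π_B(Z(T))
    (hZBk : ∀ c : T,
      (c = f * c * f ∧ ∀ y : T, y = f * y * f → iterComm k c y = 0) ↔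
      (∃ z : T, (∀ x : T, z * x = x * z) ∧ c = f * z * f))
    -- (3): description of Z(T) via m0
    (hZT : ∃ m0 : T, m0 = e * m0 * f ∧
      ∀ z : T, (∀ x : T, z * x = x * z) ↔
        ∃ a b : T, (a = e * a * e ∧ ∀ x : T, x = e * x * e → a * x = x * a) ∧
          (b = f * b * f ∧ ∀ y : T, y = f * y * f → b * y = y * b) ∧
          a * m0 = m0 * b ∧ z = a + b)
    (Θ : T →ₗ[R] T) (hΘ : ∀ t : T, iterComm k (Θ t) t = 0) :
    ∃ lam : T, (∀ x : T, lam * x = x * lam) ∧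
      ∃ ζ : T →ₗ[R] T, (∀ t x : T, ζ t * x = x * ζ t) ∧
        ∀ t : T, Θ t = lam * t + ζ t := by
  have hef1 : e + f = 1 := by rw [hf]; abel
  have hff : f * f = f := by
    have h : (1 - e) * (1 - e) = 1 - e - e + e*e := by noncomm_ring
    rw [hf, h, he]; abel
  have hef : e * f = 0 := by rw [hf, mul_sub, mul_one, he, sub_self]
  have hfe : f * e = 0 := by rw [hf, sub_mul, one_mul, he, sub_self]
  exact duwang_aux ⟨e, f, hef1, he, hff, hef, hfe, htri, hMfaithL, hMfaithR⟩
    htf k hk hZAk hZBk hZT Θ hΘ
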